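/- arXiv:1711.07909 — 4 statements merged into one kernel-verified Lean document; each statement's English description precedes it below -/
import Mathlib

section
/- Let n ∈ ℕ and let n̄ be a partition of n (a multiset of positive integers summing to n). Then the number of permutations σ of Fin n whose full cycle type equals n̄ is exactly n!/δ(n̄). Equivalently, the conjugacy class in S_n of any permutation with full cycle type n̄ has cardinality n!/∏_{j=1}^{n} a_j!·j^{a_j}, where a_j is the number of parts of n̄ equal to j. -/
/-- The full cycle type of a permutation: the multiset of cycle lengths in its
disjoint cycle decomposition, with each fixed point counted as a cycle of length 1. -/
def fullCycleType {n : ℕ} (σ : Equiv.Perm (Fin n)) : Multiset ℕ :=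
  σ.cycleType + Multiset.replicate (n - σ.support.card) 1

/-- `δ` of a partition, given as the multiset of its parts: if the partition has
`a_j` parts of size `j`, then `δ = ∏_j a_j! · j^{a_j}`. -/
def partDelta (m : Multiset ℕ) : ℕ :=
  m.prod * ∏ j ∈ m.toFinset, (m.count j).factorial

open Equiv Equiv.Perm Finset

set_option linter.unusedSectionVars false

namespace CCount

variable {α : Type*} [Fintype α] [DecidableEq α]

def cSetoid (g : Perm α) : Setoid α :=
  ⟨g.SameCycle, ⟨Equiv.Perm.SameCycle.refl g, Equiv.Perm.SameCycle.symm,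
    fun h h' => h.trans h'⟩⟩

abbrev QT (g : Perm α) := Quotient (cSetoid g)

instance (g : Perm α) : DecidableEq (QT g) := fun a b =>
  Quotient.recOnSubsingleton₂ a b fun x y =>
    decidable_of_iff (g.SameCycle x y) ⟨fun h => Quotient.sound h, fun h => Quotient.exact h⟩

def qmk (g : Perm α) (x : α) : QT g := Quotient.mk (cSetoid g) x

instance (g : Perm α) : Fintype (QT g) :=
  Fintype.ofSurjective (qmk g) (fun q => ⟨q.out, Quotient.out_eq q⟩)

lemma qmk_eq_iff {g : Perm α} {x y : α} : qmk g x = qmk g y ↔ g.SameCycle x y :=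
  ⟨fun h => Quotient.exact h, fun h => Quotient.sound h⟩

lemma qmk_out {g : Perm α} (q : QT g) : qmk g q.out = q := Quotient.out_eq q

lemma sameCycle_out {g : Perm α} (x : α) : g.SameCycle (qmk g x).out x :=
  qmk_eq_iff.mp (qmk_out (qmk g x))

lemma qmk_zpow {g : Perm α} (m : ℤ) (x : α) : qmk g ((g ^ m) x) = qmk g x :=
  qmk_eq_iff.mpr (Equiv.Perm.SameCycle.symm ⟨m, rfl⟩)

lemma qmk_apply {g : Perm α} (x : α) : qmk g (g x) = qmk g x := by
  have := qmk_zpow (g := g) 1 x; simpa using this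

def cls (g : Perm α) (q : QT g) : Finset α := univ.filter (fun x => qmk g x = q)

lemma mem_cls {g : Perm α} {q : QT g} {x : α} : x ∈ cls g q ↔ qmk g x = q := by
  simp [cls]

def qsize (g : Perm α) (q : QT g) : ℕ := (cls g q).card

lemma out_mem_cls {g : Perm α} (q : QT g) : q.out ∈ cls g q := mem_cls.mpr (qmk_out q)

lemma isCycleOn_cls (g : Perm α) (q : QT g) : g.IsCycleOn (cls g q : Set α) := by
  constructor
  · constructor
    · intro x hx
      simp only [Finset.coe_filter, Set.mem_setOf_eq, cls, Finset.mem_coe] at hx ⊢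
      exact ⟨Finset.mem_univ _, by rw [qmk_apply, hx.2]⟩
    constructor
    · exact fun x _ y _ h => g.injective h
    · intro y hy
      refine ⟨g⁻¹ y, ?_, Equiv.apply_symm_apply g y⟩
      simp only [Finset.coe_filter, Set.mem_setOf_eq, cls, Finset.mem_coe] at hy ⊢
      refine ⟨Finset.mem_univ _, ?_⟩
      have : g⁻¹ y = (g ^ (-1 : ℤ)) y := by simp
      rw [this, qmk_zpow, hy.2]
  · intro x hx y hy
    simp only [Finset.mem_coe] at hx hy
    exact (qmk_eq_iff (g := g)).mp ((mem_cls.mp hx).trans (mem_cls.mp hy).symm)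

lemma zpow_fix_iff {g : Perm α} (x : α) (m : ℤ) :
    (g ^ m) x = x ↔ (qsize g (qmk g x) : ℤ) ∣ m :=
  (isCycleOn_cls g (qmk g x)).zpow_apply_eq (mem_cls.mpr rfl)

lemma period_transfer {g : Perm α} {x y : α}
    (h : qsize g (qmk g x) = qsize g (qmk g y)) {e e' : ℤ}
    (he : (g ^ e) x = (g ^ e') x) : (g ^ e) y = (g ^ e') y := by
  have hx : (g ^ (e - e')) ((g ^ e') x) = (g ^ e') x := by
    have : (g ^ (e - e')) ((g ^ e') x) = (g ^ e) x := by
      rw [← Equiv.Perm.mul_apply, ← zpow_add, sub_add_cancel]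
    rw [this, he]
  have hdvd : (qsize g (qmk g x) : ℤ) ∣ (e - e') := by
    have h2 := (zpow_fix_iff ((g ^ e') x) (e - e')).mp hx
    rwa [qmk_zpow] at h2
  have hy : (g ^ (e - e')) y = y := (zpow_fix_iff y (e - e')).mpr (h ▸ hdvd)
  calc (g ^ e) y = (g ^ (e - e')) ((g ^ e') y) := by
        rw [← Equiv.Perm.mul_apply, ← zpow_add, sub_add_cancel]
    _ = (g ^ e') ((g ^ (e - e')) y) := by
        rw [← Equiv.Perm.mul_apply, ← Equiv.Perm.mul_apply, ← zpow_add, ← zpow_add, add_comm]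
    _ = (g ^ e') y := by rw [hy]


section Tau

variable {g k : Perm α}

lemma commute_zpow_apply (hk : k * g = g * k) (m : ℤ) (x : α) :
    k ((g ^ m) x) = (g ^ m) (k x) := by
  have h : Commute k g := hk
  have h2 : k * (g ^ m) = (g ^ m) * k := h.zpow_right m
  calc k ((g ^ m) x) = (k * g ^ m) x := rfl
    _ = ((g ^ m) * k) x := by rw [h2]
    _ = (g ^ m) (k x) := rfl

lemma sameCycle_map (hk : k * g = g * k) {a b : α} :
    g.SameCycle a b ↔ g.SameCycle (k a) (k b) := by
  constructor
  · rintro ⟨i, hi⟩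
    exact ⟨i, by rw [← commute_zpow_apply hk]; exact congrArg k hi⟩
  · rintro ⟨i, hi⟩
    refine ⟨i, k.injective ?_⟩
    rw [commute_zpow_apply hk, hi]

def tauPerm (hk : k * g = g * k) : Perm (QT g) :=
  Quotient.congr k (fun _ _ => sameCycle_map hk)

lemma tauPerm_qmk (hk : k * g = g * k) (x : α) :
    tauPerm hk (qmk g x) = qmk g (k x) := rfl

lemma qsize_tauPerm (hk : k * g = g * k) (q : QT g) :
    qsize g (tauPerm hk q) = qsize g q := by
  refine Quotient.inductionOn q (fun x => ?_)
  show qsize g (tauPerm hk (qmk g x)) = qsize g (qmk g x)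
  rw [tauPerm_qmk]
  refine (Finset.card_bij (fun y _ => k y) ?_ ?_ ?_).symm
  · intro y hy
    rw [mem_cls] at hy ⊢
    exact qmk_eq_iff.mpr ((sameCycle_map hk).mp (qmk_eq_iff.mp hy))
  · intro y _ z _ h
    exact k.injective h
  · intro z hz
    rw [mem_cls] at hz
    refine ⟨k⁻¹ z, ?_, Equiv.apply_symm_apply k z⟩
    rw [mem_cls]
    refine qmk_eq_iff.mpr ((sameCycle_map hk).mpr ?_)
    rw [show k (k⁻¹ z) = z from Equiv.apply_symm_apply k z]
    exact qmk_eq_iff.mp hz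

end Tau

variable (g : Perm α)

abbrev Target : Type _ :=
  Σ τ : Perm (QT g), {f : QT g → α //
    (∀ q, qsize g (τ q) = qsize g q) ∧ ∀ q, qmk g (f q) = τ q}

noncomputable def Phi : {k : Perm α // k * g = g * k} → Target g := fun kk =>
  ⟨tauPerm kk.2, ⟨fun q => kk.1 q.out,
    fun q => qsize_tauPerm kk.2 q,
    fun q => by rw [← qmk_out (g := g) q, tauPerm_qmk]; rw [qmk_out]⟩⟩

lemma Phi_bijective : Function.Bijective (Phi g) := by
  constructor
  · rintro a b h
    have hf : ∀ q : QT g, a.1 q.out = b.1 q.out :=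
      fun q => congrFun (congrArg (fun t : Target g => fun q => (t.2.1 q)) h) q
    refine Subtype.ext (Equiv.ext fun x => ?_)
    obtain ⟨e, he⟩ := sameCycle_out (g := g) x
    rw [← he, commute_zpow_apply a.2, commute_zpow_apply b.2, hf]
  · rintro ⟨τ, f, hsz, hf⟩
    classical
    set k0 : α → α := fun x => (g ^ (sameCycle_out (g := g) x).choose) (f (qmk g x)) with hk0
    have kval : ∀ (x : α) (e : ℤ), (g ^ e) ((qmk g x).out) = x →
        k0 x = (g ^ e) (f (qmk g x)) := by
      intro x e he
      have hsz' : qsize g (qmk g ((qmk g x).out)) = qsize g (qmk g (f (qmk g x))) := by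
        rw [qmk_out, hf (qmk g x), hsz (qmk g x)]
      exact period_transfer hsz' ((sameCycle_out (g := g) x).choose_spec.trans he.symm)
    have qmk_k0 : ∀ x, qmk g (k0 x) = τ (qmk g x) := by
      intro x
      rw [hk0]
      simp only []
      rw [qmk_zpow, hf]
    have k0_apply : ∀ x, k0 (g x) = g (k0 x) := by
      intro x
      have hq : qmk g (g x) = qmk g x := qmk_apply x
      set c := (sameCycle_out (g := g) x).choose with hc
      have he := (sameCycle_out (g := g) x).choose_spec
      have h1 : (g ^ (c + 1)) ((qmk g (g x)).out) = g x := by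
        rw [hq, add_comm, zpow_add, zpow_one, Equiv.Perm.mul_apply, he]
      rw [kval (g x) (c + 1) h1, hq, add_comm, zpow_add, zpow_one, Equiv.Perm.mul_apply,
        kval x c he]
    have k0_inj : Function.Injective k0 := by
      intro x y h
      have hq : τ (qmk g x) = τ (qmk g y) := by rw [← qmk_k0, ← qmk_k0, h]
      have hqq : qmk g x = qmk g y := τ.injective hq
      obtain ⟨ex, hex⟩ := sameCycle_out (g := g) x
      obtain ⟨ey, hey⟩ := sameCycle_out (g := g) y
      have e1 : k0 x = (g ^ ex) (f (qmk g x)) := kval x ex hex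
      have e2 : k0 y = (g ^ ey) (f (qmk g y)) := kval y ey hey
      have e2' : k0 y = (g ^ ey) (f (qmk g x)) := by rw [e2, hqq]
      have h2 : (g ^ ex) (f (qmk g x)) = (g ^ ey) (f (qmk g x)) := by
        rw [← e1, ← e2', h]
      have hsz' : qsize g (qmk g (f (qmk g x))) = qsize g (qmk g ((qmk g x).out)) := by
        rw [qmk_out, hf (qmk g x), hsz (qmk g x)]
      have h3 := period_transfer hsz' h2
      rw [hex] at h3
      rw [← hqq] at hey
      rw [hey] at h3
      exact h3
    have k0_bij := (Finite.injective_iff_bijective).mp k0_inj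
    set k : Perm α := Equiv.ofBijective k0 k0_bij with hk
    have hkco : ∀ x, k x = k0 x := fun x => rfl
    have hcomm : k * g = g * k := by
      ext x
      show k (g x) = g (k x)
      rw [hkco, hkco]
      exact k0_apply x
    refine ⟨⟨k, hcomm⟩, ?_⟩
    have htau : tauPerm hcomm = τ := by
      refine Equiv.ext fun q => Quotient.inductionOn q (fun x => ?_)
      show tauPerm hcomm (qmk g x) = τ (qmk g x)
      rw [tauPerm_qmk, hkco, qmk_k0]
    have hcongr : ∀ (τ₁ τ₂ : Perm (QT g)) (h : τ₁ = τ₂) f₁ h₁ f₂ h₂, f₁ = f₂ →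
        (⟨τ₁, ⟨f₁, h₁⟩⟩ : Target g) = ⟨τ₂, ⟨f₂, h₂⟩⟩ := by
      rintro τ₁ τ₂ rfl f₁ h₁ f₂ h₂ rfl
      rfl
    refine hcongr _ _ htau _ _ _ _ (funext fun q => ?_)
    rw [hkco]
    have h0 : (g ^ (0 : ℤ)) ((qmk g q.out).out) = q.out := by
      rw [zpow_zero, qmk_out]
      rfl
    rw [kval q.out 0 h0, zpow_zero, qmk_out]
    rfl

lemma card_Zc : Nat.card {k : Perm α // k * g = g * k} = Nat.card (Target g) :=
  Nat.card_congr (Equiv.ofBijective _ (Phi_bijective g))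


lemma card_Target :
    Nat.card (Target g) =
      #(univ.filter (fun τ : Perm (QT g) => ∀ q, qsize g (τ q) = qsize g q)) *
        ∏ q : QT g, qsize g q := by
  classical
  rw [Nat.card_eq_fintype_card, Fintype.card_sigma]
  have hcard : ∀ τ : Perm (QT g),
      Fintype.card {f : QT g → α //
        (∀ q, qsize g (τ q) = qsize g q) ∧ ∀ q, qmk g (f q) = τ q} =
      if (∀ q, qsize g (τ q) = qsize g q) then ∏ q : QT g, qsize g q else 0 := by
    intro τ
    by_cases hA : ∀ q, qsize g (τ q) = qsize g q
    · rw [if_pos hA]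
      have e1 : {f : QT g → α //
            (∀ q, qsize g (τ q) = qsize g q) ∧ ∀ q, qmk g (f q) = τ q} ≃
          {f : QT g → α // ∀ q, qmk g (f q) = τ q} :=
        Equiv.subtypeEquivRight (fun f => ⟨fun h => h.2, fun h => ⟨hA, h⟩⟩)
      have e2 : {f : QT g → α // ∀ q, qmk g (f q) = τ q} ≃
          ∀ q : QT g, {x : α // qmk g x = τ q} :=
        Equiv.subtypePiEquivPi (p := fun q x => qmk g x = τ q)
      rw [Fintype.card_congr (e1.trans e2), Fintype.card_pi]
      have : ∀ q : QT g, Fintype.card {x : α // qmk g x = τ q} = qsize g (τ q) := by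
        intro q
        rw [Fintype.card_subtype]
        rfl
      rw [Finset.prod_congr rfl (fun q _ => this q)]
      exact Equiv.prod_comp τ (qsize g)
    · rw [if_neg hA, Fintype.card_eq_zero_iff]
      exact ⟨fun f => hA f.2.1⟩
  rw [Finset.sum_congr rfl (fun τ _ => hcard τ), ← Finset.sum_filter,
    Finset.sum_const, smul_eq_mul]

section PermFixing

variable {β : Type*} [Fintype β] [DecidableEq β] (f : β → ℕ)

def t0 (u : ∀ j : {j // j ∈ univ.image f}, Perm {b // f b = j.1}) (b : β) : β :=
  (u ⟨f b, mem_image_of_mem f (mem_univ b)⟩ ⟨b, rfl⟩).1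

lemma t0_eq_aux (u : ∀ j : {j // j ∈ univ.image f}, Perm {b // f b = j.1})
    (jv : ℕ) (hj : jv ∈ univ.image f) (b : β) (hb : f b = jv) :
    t0 f u b = (u ⟨jv, hj⟩ ⟨b, hb⟩).1 := by subst hb; rfl

lemma t0_eq (u : ∀ j : {j // j ∈ univ.image f}, Perm {b // f b = j.1})
    (j : {j // j ∈ univ.image f}) (x : {b // f b = j.1}) :
    t0 f u x.1 = (u j x).1 :=
  t0_eq_aux f u j.1 j.2 x.1 x.2

lemma f_t0 (u : ∀ j : {j // j ∈ univ.image f}, Perm {b // f b = j.1}) (b : β) :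
    f (t0 f u b) = f b := (u _ _).2

lemma t0_bij (u : ∀ j : {j // j ∈ univ.image f}, Perm {b // f b = j.1}) :
    Function.Bijective (t0 f u) := by
  constructor
  · intro b b' h
    have hfb : f b' = f b := by rw [← f_t0 f u b', ← h, f_t0 f u b]
    have hb' := t0_eq f u ⟨f b, mem_image_of_mem f (mem_univ b)⟩ ⟨b', hfb⟩
    have hb := t0_eq f u ⟨f b, mem_image_of_mem f (mem_univ b)⟩ ⟨b, rfl⟩
    have h2 : (u ⟨f b, mem_image_of_mem f (mem_univ b)⟩ ⟨b, rfl⟩).1 =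
        (u ⟨f b, mem_image_of_mem f (mem_univ b)⟩ ⟨b', hfb⟩).1 :=
      hb.symm.trans (h.trans hb')
    have h3 := (u ⟨f b, mem_image_of_mem f (mem_univ b)⟩).injective (Subtype.ext h2)
    exact congrArg Subtype.val h3
  · intro b
    have hjb : f b ∈ univ.image f := mem_image_of_mem f (mem_univ b)
    set y := (u ⟨f b, hjb⟩).symm ⟨b, rfl⟩ with hy
    refine ⟨y.1, ?_⟩
    have h1 := t0_eq f u ⟨f b, hjb⟩ y
    rw [h1, hy, Equiv.apply_symm_apply]

noncomputable def PsiFun (u : ∀ j : {j // j ∈ univ.image f}, Perm {b // f b = j.1}) :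
    {τ : Perm β // ∀ b, f (τ b) = f b} :=
  ⟨Equiv.ofBijective _ (t0_bij f u), fun b => f_t0 f u b⟩

lemma Psi_bij : Function.Bijective (PsiFun f) := by
  constructor
  · intro u u' h
    have hval : ∀ b, t0 f u b = t0 f u' b :=
      fun b => congrFun (congrArg (fun t => ((t.1 : Perm β) : β → β)) h) b
    funext j
    refine Equiv.ext fun x => Subtype.ext ?_
    rw [← t0_eq f u j x, ← t0_eq f u' j x, hval]
  · rintro ⟨τ, hτ⟩
    refine ⟨fun j => τ.subtypePerm (fun b => by rw [hτ b]), ?_⟩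
    exact Subtype.ext (Equiv.ext fun b => rfl)

lemma card_filter_perm_fixing :
    #(univ.filter (fun τ : Perm β => ∀ b, f (τ b) = f b)) =
      ∏ j ∈ univ.image f, Nat.factorial (#(univ.filter (fun b => f b = j))) := by
  classical
  rw [← Fintype.card_subtype, ← Fintype.card_congr (Equiv.ofBijective _ (Psi_bij f)),
    Fintype.card_pi]
  rw [← Finset.prod_coe_sort (univ.image f)
    (fun j => Nat.factorial (#(univ.filter (fun b => f b = j))))]
  refine Finset.prod_congr rfl ?_
  intro j _
  rw [Fintype.card_perm, Fintype.card_subtype]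

end PermFixing


section PartA

variable {g : Perm α}

lemma cls_of_not_mem_support {x : α} (hx : x ∉ g.support) :
    cls g (qmk g x) = {x} := by
  ext y
  rw [mem_cls, qmk_eq_iff, Finset.mem_singleton]
  constructor
  · intro h
    obtain ⟨i, hi⟩ := h.symm
    rw [zpow_apply_eq_self_of_apply_eq_self (Equiv.Perm.notMem_support.mp hx) i] at hi
    exact hi.symm
  · rintro rfl
    exact Equiv.Perm.SameCycle.refl g y

lemma qsize_eq_one_iff (q : QT g) : qsize g q = 1 ↔ q.out ∉ g.support := by
  constructor
  · intro h hsupp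
    obtain ⟨x, hx⟩ := Finset.card_eq_one.mp h
    have h1 : q.out = x := Finset.mem_singleton.mp (hx ▸ out_mem_cls q)
    have h2 : g q.out ∈ cls g q := by
      rw [mem_cls, qmk_apply, qmk_out]
    have h3 : g q.out = x := Finset.mem_singleton.mp (hx ▸ h2)
    exact Equiv.Perm.mem_support.mp hsupp (h3.trans h1.symm)
  · intro h
    have h2 := cls_of_not_mem_support (x := q.out) (g := g) h
    rw [qmk_out] at h2
    rw [qsize, h2, Finset.card_singleton]

lemma out_mem_support {q : QT g} (h : qsize g q ≠ 1) : q.out ∈ g.support := by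
  by_contra hc
  exact h ((qsize_eq_one_iff q).mpr hc)

lemma support_cycleOf_eq_cls {x : α} (hx : x ∈ g.support) :
    (g.cycleOf x).support = cls g (qmk g x) := by
  ext y
  rw [Equiv.Perm.mem_support_cycleOf_iff, mem_cls, qmk_eq_iff]
  exact ⟨fun h => h.1.symm, fun h => ⟨h.symm, hx⟩⟩

lemma map_qsize (g : Perm α) :
    ((univ : Finset (QT g)).val.map (qsize g)) =
      g.cycleType + Multiset.replicate (Fintype.card α - g.support.card) 1 := by
  refine Multiset.ext.mpr fun j => ?_
  rw [Multiset.count_add, Multiset.count_map, Multiset.count_replicate]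
  have hfin : ∀ (p : QT g → Prop) (hp : DecidablePred p),
      Multiset.card (Multiset.filter p (univ : Finset (QT g)).val) =
        (univ.filter p).card := fun p hp => rfl
  rw [hfin _ _]
  by_cases hj : j = 1
  · subst hj
    have h1 : Multiset.count 1 g.cycleType = 0 :=
      Multiset.count_eq_zero.mpr (fun h => by
        have := Equiv.Perm.two_le_of_mem_cycleType h; omega)
    rw [h1, if_pos rfl, zero_add]
    have hcard : (univ.filter (fun q : QT g => 1 = qsize g q)).card =
        (g.supportᶜ).card := by
      refine (Finset.card_bij (fun x _ => qmk g x) ?_ ?_ ?_).symm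
      · intro x hx
        have hx' : x ∉ g.support := by simpa using hx
        refine Finset.mem_filter.mpr ⟨Finset.mem_univ _, ?_⟩
        rw [qsize, cls_of_not_mem_support hx', Finset.card_singleton]
      · intro x hx x' hx' h
        have hxs : x ∉ g.support := by simpa using hx
        have h' : qmk g x = qmk g x' := h
        have : x' ∈ cls g (qmk g x) := by rw [h']; exact mem_cls.mpr rfl
        rw [cls_of_not_mem_support hxs] at this
        exact (Finset.mem_singleton.mp this).symm
      · intro q hq
        have h1 : 1 = qsize g q := (Finset.mem_filter.mp hq).2
        have := (qsize_eq_one_iff q).mp h1.symm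
        exact ⟨q.out, by simpa using this, qmk_out q⟩
    rw [hcard, Finset.card_compl]
  · rw [if_neg (fun h => hj h.symm), add_zero, Equiv.Perm.cycleType_def, Multiset.count_map]
    have hfin2 : Multiset.card (Multiset.filter
          (fun c => j = (Finset.card ∘ Equiv.Perm.support) c) g.cycleFactorsFinset.val) =
        (g.cycleFactorsFinset.filter (fun c => j = (Finset.card ∘ Equiv.Perm.support) c)).card :=
      rfl
    rw [hfin2]
    refine Finset.card_bij (fun q _ => g.cycleOf q.out) ?_ ?_ ?_
    · intro q hq
      have hq' : j = qsize g q := (Finset.mem_filter.mp hq).2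
      have hout : q.out ∈ g.support := out_mem_support (fun h => hj (hq'.trans h))
      refine Finset.mem_filter.mpr
        ⟨Equiv.Perm.cycleOf_mem_cycleFactorsFinset_iff.mpr hout, ?_⟩
      show j = (g.cycleOf q.out).support.card
      rw [support_cycleOf_eq_cls hout, qmk_out]
      exact hq'
    · intro q hq q' hq' h
      have hj1 : j = qsize g q := (Finset.mem_filter.mp hq).2
      have hj2 : j = qsize g q' := (Finset.mem_filter.mp hq').2
      have hout : q.out ∈ g.support := out_mem_support (fun h => hj (hj1.trans h))
      have hout' : q'.out ∈ g.support := out_mem_support (fun h => hj (hj2.trans h))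
      have h' : g.cycleOf q.out = g.cycleOf q'.out := h
      have hs : cls g q = cls g q' := by
        rw [← qmk_out (g := g) q, ← qmk_out (g := g) q',
          ← support_cycleOf_eq_cls hout, ← support_cycleOf_eq_cls hout', h']
      have hmem : q'.out ∈ cls g q := hs ▸ out_mem_cls q'
      rw [← qmk_out (g := g) q', ← mem_cls.mp hmem]
    · intro c hc
      obtain ⟨hcf, hcj⟩ := Finset.mem_filter.mp hc
      have hcyc : c.IsCycle := (Equiv.Perm.mem_cycleFactorsFinset_iff.mp hcf).1
      have hne : c.support.Nonempty := by
        rw [← Finset.card_pos]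
        have := hcyc.two_le_card_support
        omega
      obtain ⟨x, hx⟩ := hne
      have hcx : c = g.cycleOf x := Equiv.Perm.cycle_is_cycleOf hx hcf
      have hxg : x ∈ g.support := Equiv.Perm.support_cycleOf_le g x (hcx ▸ hx)
      refine ⟨qmk g x, Finset.mem_filter.mpr ⟨Finset.mem_univ _, ?_⟩, ?_⟩
      · show j = qsize g (qmk g x)
        rw [qsize, ← support_cycleOf_eq_cls hxg, ← hcx]
        exact hcj
      · have hout : (qmk g x).out ∈ (g.cycleOf x).support := by
          rw [support_cycleOf_eq_cls hxg]
          exact out_mem_cls _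
        have h2 : g.cycleOf x = g.cycleOf ((qmk g x).out) :=
          Equiv.Perm.cycle_is_cycleOf hout (hcx ▸ hcf)
        show g.cycleOf (qmk g x).out = c
        rw [← h2, ← hcx]

end PartA


lemma card_commuting (g : Perm α) :
    Nat.card {k : Perm α // k * g = g * k} =
      ((univ : Finset (QT g)).val.map (qsize g)).prod *
        ∏ j ∈ ((univ : Finset (QT g)).val.map (qsize g)).toFinset,
          (((univ : Finset (QT g)).val.map (qsize g)).count j).factorial := by
  classical
  rw [card_Zc, card_Target, card_filter_perm_fixing (qsize g)]
  have hm : ((univ : Finset (QT g)).val.map (qsize g)).toFinset = univ.image (qsize g) :=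
    rfl
  have hprod : ((univ : Finset (QT g)).val.map (qsize g)).prod = ∏ q : QT g, qsize g q :=
    rfl
  rw [hm, hprod, mul_comm]
  congr 1
  refine Finset.prod_congr rfl fun j _ => ?_
  congr 1
  rw [Multiset.count_map]
  show #(filter (fun b => qsize g b = j) univ) = #(filter (fun q => j = qsize g q) univ)
  congr 1
  ext q
  simp [eq_comm]

end CCount


open Equiv Equiv.Perm Finset in
/-- **Size of a conjugacy class in `S_n`.** The number of permutations of `Fin n`
with full cycle type a given partition `n̄` of `n` is exactly `n!/δ(n̄)`
(in particular `δ(n̄)` divides `n!`). -/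
theorem card_perm_with_fullCycleType (n : ℕ) (P : Nat.Partition n) :
    partDelta P.parts ∣ n.factorial ∧
      (Finset.univ.filter
          (fun σ : Equiv.Perm (Fin n) => fullCycleType σ = P.parts)).card
        = n.factorial / partDelta P.parts := by
  obtain ⟨g₀, hg₀⟩ : ∃ g : Perm (Fin n), g.cycleType = P.parts.filter (fun a => 2 ≤ a) := by
    refine (Equiv.Perm.exists_with_cycleType_iff (Fin n)).mpr ⟨?_, ?_⟩
    · rw [Fintype.card_fin]
      calc (P.parts.filter (fun a => 2 ≤ a)).sum
          ≤ (P.parts.filter (fun a => 2 ≤ a)).sum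
            + (P.parts.filter (fun a => ¬ 2 ≤ a)).sum := Nat.le_add_right _ _
        _ = P.parts.sum := by
            rw [← Multiset.sum_add, Multiset.filter_add_not]
        _ = n := P.parts_sum
    · intro a ha
      exact (Multiset.mem_filter.mp ha).2
  have hone : P.parts.filter (fun a => ¬ 2 ≤ a) =
      Multiset.replicate (n - (P.parts.filter (fun a => 2 ≤ a)).sum) 1 := by
    have hall : ∀ b ∈ P.parts.filter (fun a => ¬ 2 ≤ a), b = 1 := by
      intro b hb
      obtain ⟨hbm, hb2⟩ := Multiset.mem_filter.mp hb
      have := P.parts_pos hbm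
      omega
    have hrep := Multiset.eq_replicate_card.mpr hall
    have hsplit : (P.parts.filter (fun a => 2 ≤ a)).sum
        + (P.parts.filter (fun a => ¬ 2 ≤ a)).sum = n := by
      rw [← Multiset.sum_add, Multiset.filter_add_not, P.parts_sum]
    have hsum1 : (P.parts.filter (fun a => ¬ 2 ≤ a)).sum =
        Multiset.card (P.parts.filter (fun a => ¬ 2 ≤ a)) := by
      conv_lhs => rw [hrep]
      rw [Multiset.sum_replicate, smul_eq_mul, mul_one]
    have hcard : Multiset.card (P.parts.filter (fun a => ¬ 2 ≤ a)) =
        n - (P.parts.filter (fun a => 2 ≤ a)).sum := by omega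
    rw [hrep, hcard]
  have hsupp : g₀.support.card = (P.parts.filter (fun a => 2 ≤ a)).sum := by
    rw [← Equiv.Perm.sum_cycleType, hg₀]
  have hfull : fullCycleType g₀ = P.parts := by
    show g₀.cycleType + Multiset.replicate (n - g₀.support.card) 1 = P.parts
    rw [hg₀, hsupp, ← hone, Multiset.filter_add_not]
  have hfil : ∀ τ : Perm (Fin n), (fullCycleType τ).filter (fun a => 2 ≤ a) = τ.cycleType := by
    intro τ
    show (τ.cycleType + Multiset.replicate _ 1).filter _ = _
    rw [Multiset.filter_add,
      Multiset.filter_eq_self.mpr (fun a ha => Equiv.Perm.two_le_of_mem_cycleType ha),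
      Multiset.filter_eq_nil.mpr
        (fun a ha => by rw [Multiset.eq_of_mem_replicate ha]; omega),
      add_zero]
  have hconj : ∀ σ : Perm (Fin n), fullCycleType σ = P.parts ↔ σ.cycleType = g₀.cycleType := by
    intro σ
    constructor
    · intro h
      have h2 : fullCycleType σ = fullCycleType g₀ := h.trans hfull.symm
      rw [← hfil σ, ← hfil g₀, h2]
    · intro h
      have hcard : σ.support.card = g₀.support.card := by
        rw [← Equiv.Perm.sum_cycleType, ← Equiv.Perm.sum_cycleType, h]
      show σ.cycleType + Multiset.replicate (n - σ.support.card) 1 = P.parts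
      rw [h, hcard]
      exact hfull
  have hδ : partDelta P.parts = Nat.card {k : Perm (Fin n) // k * g₀ = g₀ * k} := by
    rw [CCount.card_commuting g₀]
    have hm : ((univ : Finset (CCount.QT g₀)).val.map (CCount.qsize g₀)) =
        fullCycleType g₀ := by
      rw [CCount.map_qsize g₀, Fintype.card_fin]
      rfl
    rw [hm, hfull, partDelta]
  haveI : Fintype (MulAction.orbit (ConjAct (Perm (Fin n))) g₀) :=
    Set.Finite.fintype (Set.toFinite _)
  have horb := MulAction.card_orbit_mul_card_stabilizer_eq_card_group
    (ConjAct (Perm (Fin n))) g₀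
  have hG : Fintype.card (ConjAct (Perm (Fin n))) = n.factorial := by
    rw [Fintype.card_congr (ConjAct.ofConjAct (G := Perm (Fin n))).toEquiv,
      Fintype.card_perm, Fintype.card_fin]
  have hstab : Fintype.card (MulAction.stabilizer (ConjAct (Perm (Fin n))) g₀) =
      Nat.card {k : Perm (Fin n) // k * g₀ = g₀ * k} := by
    rw [Nat.card_eq_fintype_card]
    refine (Fintype.card_congr (Equiv.subtypeEquiv
      (ConjAct.toConjAct (G := Perm (Fin n))).toEquiv (fun k => ?_))).symm
    show k * g₀ = g₀ * k ↔
      ConjAct.toConjAct k ∈ MulAction.stabilizer (ConjAct (Perm (Fin n))) g₀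
    rw [MulAction.mem_stabilizer_iff, ConjAct.smul_def, ConjAct.ofConjAct_toConjAct]
    exact (mul_inv_eq_iff_eq_mul).symm
  have horb2 : Nat.card (MulAction.orbit (ConjAct (Perm (Fin n))) g₀) =
      #(univ.filter (fun σ : Perm (Fin n) => fullCycleType σ = P.parts)) := by
    have e : ↥(MulAction.orbit (ConjAct (Perm (Fin n))) g₀) ≃
        {σ : Perm (Fin n) // fullCycleType σ = P.parts} := by
      refine Equiv.subtypeEquivRight fun σ => ?_
      rw [ConjAct.mem_orbit_conjAct, Equiv.Perm.isConj_iff_cycleType_eq]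
      exact (hconj σ).symm
    rw [Nat.card_congr e, Nat.card_eq_fintype_card, Fintype.card_subtype]
  have key : #(univ.filter (fun σ : Perm (Fin n) => fullCycleType σ = P.parts)) *
      partDelta P.parts = n.factorial := by
    rw [hδ, ← hstab, ← horb2, Nat.card_eq_fintype_card, horb, hG]
  constructor
  · exact ⟨_, by rw [← key, mul_comm]⟩
  · have hpos : 0 < partDelta P.parts := by
      rcases Nat.eq_zero_or_pos (partDelta P.parts) with h0 | h0
      · rw [h0, mul_zero] at key
        exact absurd key.symm (Nat.factorial_pos n).ne'
      · exact h0
    rw [← key, Nat.mul_div_cancel _ hpos]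
end

section
/- Let R be a commutative ring, n ∈ ℕ, λ ∈ R, σ a permutation of Fin n, and ε : Fin n → {1,−1} ⊆ R. Then det(I_n − λ·D_ε·M_σ) = ∏_{c} (1 − s(c)·λ^{ℓ(c)}), where the product is over the cycles c of σ (fixed points counted as cycles of length 1), ℓ(c) is the length of c, and s(c) = ∏_{i ∈ c} ε(i) is the sign of the cycle c. -/
open Equiv Finset Matrix

namespace DetSignedPermAux

variable {n : ℕ}

/-- The product of the cycle factors of `σ` belonging to `S` (made total by
intersecting with the cycle factors). -/
def cycProd (σ : Perm (Fin n)) (S : Finset (Perm (Fin n))) : Perm (Fin n) :=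
  (S ∩ σ.cycleFactorsFinset).noncommProd id fun _ ha _ hb hab =>
    σ.cycleFactorsFinset_mem_commute
      (Finset.mem_coe.2 (Finset.mem_inter.1 (Finset.mem_coe.1 ha)).2)
      (Finset.mem_coe.2 (Finset.mem_inter.1 (Finset.mem_coe.1 hb)).2) hab

lemma pairwise_disjoint_inter (σ : Perm (Fin n)) (S : Finset (Perm (Fin n))) :
    ((S ∩ σ.cycleFactorsFinset : Finset (Perm (Fin n))) : Set (Perm (Fin n))).Pairwise
      (fun i j => Equiv.Perm.Disjoint (id i) (id j)) :=
  σ.cycleFactorsFinset_pairwise_disjoint.mono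
    (Finset.coe_subset.2 (Finset.inter_subset_right))

lemma cycProd_support (σ : Perm (Fin n)) (S : Finset (Perm (Fin n))) :
    (cycProd σ S).support =
      (S ∩ σ.cycleFactorsFinset).biUnion Equiv.Perm.support := by
  exact Equiv.Perm.support_noncommProd (pairwise_disjoint_inter σ S)

lemma cycProd_mul (σ : Perm (Fin n)) (S : Finset (Perm (Fin n))) :
    ∃ comm, cycProd σ S *
      (σ.cycleFactorsFinset \ (S ∩ σ.cycleFactorsFinset)).noncommProd id comm = σ := by
  have hu : (S ∩ σ.cycleFactorsFinset) ∪
      (σ.cycleFactorsFinset \ (S ∩ σ.cycleFactorsFinset)) = σ.cycleFactorsFinset :=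
    Finset.union_sdiff_of_subset Finset.inter_subset_right
  have hd : Disjoint (S ∩ σ.cycleFactorsFinset)
      (σ.cycleFactorsFinset \ (S ∩ σ.cycleFactorsFinset)) := Finset.disjoint_sdiff
  have commU : { x | x ∈ (S ∩ σ.cycleFactorsFinset) ∪
      (σ.cycleFactorsFinset \ (S ∩ σ.cycleFactorsFinset)) }.Pairwise
      (Function.onFun Commute id) := by
    intro a ha b hb hab
    refine σ.cycleFactorsFinset_mem_commute ?_ ?_ hab
    · have := hu ▸ (Finset.mem_coe.1 ha); exact this
    · have := hu ▸ (Finset.mem_coe.1 hb); exact this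
  refine ⟨commU.mono (Finset.coe_subset.2 Finset.subset_union_right), ?_⟩
  have h1 := Finset.noncommProd_union_of_disjoint hd id commU
  have h2 : Finset.noncommProd ((S ∩ σ.cycleFactorsFinset) ∪
      (σ.cycleFactorsFinset \ (S ∩ σ.cycleFactorsFinset))) id commU
      = σ :=
    (Finset.noncommProd_congr hu (fun _ _ => rfl) commU).trans
      (σ.cycleFactorsFinset_noncommProd _)
  exact h1.symm.trans h2

lemma cycProd_apply_mem (σ : Perm (Fin n)) (S : Finset (Perm (Fin n)))
    {c : Perm (Fin n)} {x : Fin n} (hc : c ∈ S ∩ σ.cycleFactorsFinset)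
    (hx : x ∈ c.support) : cycProd σ S x = σ x := by
  obtain ⟨comm, hmul⟩ := cycProd_mul σ S
  have hT : x ∉ ((σ.cycleFactorsFinset \ (S ∩ σ.cycleFactorsFinset)).noncommProd
      id comm).support := by
    have hsupp := Equiv.Perm.support_noncommProd
      (k := id) (s := σ.cycleFactorsFinset \ (S ∩ σ.cycleFactorsFinset))
      (σ.cycleFactorsFinset_pairwise_disjoint.mono
        (Finset.coe_subset.2 (Finset.sdiff_subset.trans (le_refl _))))
    rw [hsupp]
    intro hmem
    obtain ⟨c', hc', hxc'⟩ := Finset.mem_biUnion.1 hmem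
    have hcc' : c ≠ c' := by
      rintro rfl
      exact (Finset.mem_sdiff.1 hc').2 hc
    have hdisj : Equiv.Perm.Disjoint c c' :=
      σ.cycleFactorsFinset_pairwise_disjoint
        (Finset.mem_coe.2 (Finset.mem_inter.1 hc).2)
        (Finset.mem_coe.2 (Finset.mem_sdiff.1 hc').1) hcc'
    exact (Finset.disjoint_left.1 hdisj.disjoint_support) hx hxc'
  have hfix : ((σ.cycleFactorsFinset \ (S ∩ σ.cycleFactorsFinset)).noncommProd
      id comm) x = x := Equiv.Perm.notMem_support.1 hT
  calc cycProd σ S x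
      = (cycProd σ S) (((σ.cycleFactorsFinset \ (S ∩ σ.cycleFactorsFinset)).noncommProd
        id comm) x) := by rw [hfix]
    _ = σ x := by rw [← Equiv.Perm.mul_apply, hmul]

lemma perm_apply_inv_self (σ : Perm (Fin n)) (i : Fin n) : σ (σ⁻¹ i) = i :=
  σ.apply_symm_apply i

lemma cycProd_inv_apply_mem (σ : Perm (Fin n)) (S : Finset (Perm (Fin n)))
    {x : Fin n} (hx : x ∈ (cycProd σ S).support) :
    (cycProd σ S)⁻¹ x = σ⁻¹ x := by
  have hy : (cycProd σ S)⁻¹ x ∈ (cycProd σ S).support := by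
    rw [← Equiv.Perm.support_inv] at hx ⊢
    exact Equiv.Perm.apply_mem_support.2 hx
  have hy' := hy
  rw [cycProd_support] at hy'
  obtain ⟨c, hc, hyc⟩ := Finset.mem_biUnion.1 hy'
  have := cycProd_apply_mem σ S hc hyc
  rw [perm_apply_inv_self] at this
  exact ((Equiv.symm_apply_eq σ).2 this).symm

lemma good_cycProd_inv (σ : Perm (Fin n)) (S : Finset (Perm (Fin n))) (i : Fin n) :
    (cycProd σ S)⁻¹ i = i ∨ σ ((cycProd σ S)⁻¹ i) = i := by
  by_cases h : i ∈ (cycProd σ S).support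
  · right; rw [cycProd_inv_apply_mem σ S h]; exact perm_apply_inv_self σ i
  · left
    rw [← Equiv.Perm.support_inv] at h
    exact Equiv.Perm.notMem_support.1 h

lemma cycProd_filter_eq (σ τ : Perm (Fin n)) (hτ : ∀ i, τ i = i ∨ σ (τ i) = i) :
    (cycProd σ (σ.cycleFactorsFinset.filter fun c => c.support ⊆ τ.support))⁻¹ = τ := by
  set U := τ.support with hUdef
  have h1 : ∀ i ∈ U, τ i = σ⁻¹ i := by
    intro i hi
    rcases hτ i with h | h
    · exact absurd h (Equiv.Perm.mem_support.1 hi)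
    · exact ((Equiv.symm_apply_eq σ).2 h.symm).symm
  have h2 : ∀ i ∈ U, σ⁻¹ i ∈ U := by
    intro i hi
    by_contra hns
    have hfix : τ (σ⁻¹ i) = σ⁻¹ i := Equiv.Perm.notMem_support.1 hns
    have heq : τ i = τ (σ⁻¹ i) := by rw [h1 i hi, hfix]
    have heq2 : i = σ⁻¹ i := τ.injective heq
    exact Equiv.Perm.mem_support.1 hi
      (by rw [h1 i hi, ← heq2])
  have himg : U.image (fun x => σ⁻¹ x) = U := by
    apply Finset.eq_of_subset_of_card_le
    · intro j hj
      obtain ⟨i, hi, rfl⟩ := Finset.mem_image.1 hj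
      exact h2 i hi
    · rw [Finset.card_image_of_injective _ (σ⁻¹ : Perm (Fin n)).injective]
  have h3 : ∀ i, σ⁻¹ i ∈ U → i ∈ U := by
    intro i hi
    rw [← himg] at hi
    obtain ⟨j, hj, hji⟩ := Finset.mem_image.1 hi
    exact ((σ⁻¹ : Perm (Fin n)).injective hji) ▸ hj
  have h4 : ∀ i, i ∈ U ↔ σ i ∈ U := fun i =>
    ⟨fun h => h3 (σ i) (by simpa using h), fun h => by simpa using h2 (σ i) h⟩
  have h5 : ∀ (k : ℤ), ∀ i, i ∈ U → (σ ^ k) i ∈ U := by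
    intro k
    induction k using Int.induction_on with
    | zero => simpa using fun i h => h
    | succ k ih =>
      intro i hi
      have : (σ ^ ((k : ℤ) + 1)) i = (σ ^ (k : ℤ)) (σ i) := by
        rw [_root_.zpow_add_one, Equiv.Perm.mul_apply]
      rw [this]
      exact ih (σ i) ((h4 i).1 hi)
    | pred k ih =>
      intro i hi
      have : (σ ^ (-(k : ℤ) - 1)) i = (σ ^ (-(k : ℤ))) (σ⁻¹ i) := by
        rw [_root_.zpow_sub_one, Equiv.Perm.mul_apply]
      rw [this]
      exact ih (σ⁻¹ i) (h2 i hi)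
  have hUsub : U ⊆ σ.support := by
    intro i hi
    rw [Equiv.Perm.mem_support]
    intro hσ
    have hinv : σ⁻¹ i = i := by
      conv_lhs => rw [← hσ]
      exact σ.symm_apply_apply i
    exact Equiv.Perm.mem_support.1 hi ((h1 i hi).trans hinv)
  set S := σ.cycleFactorsFinset.filter (fun c => c.support ⊆ U) with hS
  have hSsub : S ∩ σ.cycleFactorsFinset = S :=
    Finset.inter_eq_left.2 (Finset.filter_subset _ _)
  have hU : (cycProd σ S).support = U := by
    rw [cycProd_support, hSsub]
    apply Finset.Subset.antisymm
    · intro x hx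
      obtain ⟨c, hc, hxc⟩ := Finset.mem_biUnion.1 hx
      exact (Finset.mem_filter.1 hc).2 hxc
    · intro i hi
      refine Finset.mem_biUnion.2 ⟨σ.cycleOf i, ?_, ?_⟩
      · refine Finset.mem_filter.2
          ⟨Equiv.Perm.cycleOf_mem_cycleFactorsFinset_iff.2 (hUsub hi), ?_⟩
        intro j hj
        rw [Equiv.Perm.mem_support_cycleOf_iff] at hj
        obtain ⟨⟨k, hk⟩, _⟩ := hj
        exact hk ▸ h5 k i hi
      · rw [Equiv.Perm.mem_support_cycleOf_iff]
        exact ⟨Equiv.Perm.SameCycle.refl _ _, hUsub hi⟩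
  apply Equiv.ext
  intro x
  by_cases hx : x ∈ U
  · rw [h1 x hx]
    exact cycProd_inv_apply_mem σ S (hU ▸ hx)
  · have hτx : τ x = x := Equiv.Perm.notMem_support.1 hx
    rw [hτx]
    have hx' : x ∉ (cycProd σ S).support := by rw [hU]; exact hx
    rw [← Equiv.Perm.support_inv] at hx'
    exact Equiv.Perm.notMem_support.1 hx'

lemma filter_cycProd (σ : Perm (Fin n)) (S : Finset (Perm (Fin n)))
    (hS : S ⊆ σ.cycleFactorsFinset) :
    σ.cycleFactorsFinset.filter
      (fun c => c.support ⊆ ((cycProd σ S)⁻¹).support) = S := by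
  have hSsub : S ∩ σ.cycleFactorsFinset = S := Finset.inter_eq_left.2 hS
  have hsupp : ((cycProd σ S)⁻¹).support = S.biUnion Equiv.Perm.support := by
    rw [Equiv.Perm.support_inv, cycProd_support, hSsub]
  apply Finset.Subset.antisymm
  · intro c hc
    obtain ⟨hcCF, hcsub⟩ := Finset.mem_filter.1 hc
    rw [hsupp] at hcsub
    have hcyc : c.IsCycle := (Equiv.Perm.mem_cycleFactorsFinset_iff.1 hcCF).1
    obtain ⟨x, hx⟩ := hcyc.nonempty_support
    obtain ⟨c', hc', hxc'⟩ := Finset.mem_biUnion.1 (hcsub hx)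
    have e1 : c = σ.cycleOf x := Equiv.Perm.cycle_is_cycleOf hx hcCF
    have e2 : c' = σ.cycleOf x := Equiv.Perm.cycle_is_cycleOf hxc' (hS hc')
    rw [e1, ← e2]
    exact hc'
  · intro c hc
    refine Finset.mem_filter.2 ⟨hS hc, ?_⟩
    rw [hsupp]
    exact Finset.subset_biUnion_of_mem _ hc

lemma sign_cycProd (σ : Perm (Fin n)) (S : Finset (Perm (Fin n)))
    (hS : S ⊆ σ.cycleFactorsFinset) :
    Equiv.Perm.sign (cycProd σ S) = ∏ c ∈ S, Equiv.Perm.sign c := by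
  have hSsub : S ∩ σ.cycleFactorsFinset = S := Finset.inter_eq_left.2 hS
  have h := Finset.map_noncommProd (S ∩ σ.cycleFactorsFinset) id
    (fun _ ha _ hb hab =>
      σ.cycleFactorsFinset_mem_commute
        (Finset.mem_coe.2 (Finset.mem_inter.1 (Finset.mem_coe.1 ha)).2)
        (Finset.mem_coe.2 (Finset.mem_inter.1 (Finset.mem_coe.1 hb)).2) hab)
    (Equiv.Perm.sign (α := Fin n))
  exact h.trans ((Finset.noncommProd_eq_prod _ _).trans (by rw [hSsub]; rfl))

lemma entry_eq {R : Type*} [CommRing R] (lam : R) (σ : Perm (Fin n)) (ε : Fin n → R)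
    (i j : Fin n) :
    ((1 : Matrix (Fin n) (Fin n) R) - lam • (Matrix.diagonal ε * σ.permMatrix R)) i j
      = (if i = j then (1 : R) else 0) - lam * (ε i * if j = σ i then 1 else 0) := by
  simp [Matrix.sub_apply, Matrix.one_apply, Matrix.smul_apply, Matrix.diagonal_mul,
    PEquiv.toMatrix_apply, Equiv.toPEquiv_apply, smul_eq_mul, Option.mem_def, eq_comm]

lemma term_eq {R : Type*} [CommRing R] (lam : R) (σ : Perm (Fin n)) (ε : Fin n → R)
    (S : Finset (Perm (Fin n))) (hS : S ⊆ σ.cycleFactorsFinset) :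
    Equiv.Perm.sign ((cycProd σ S)⁻¹) •
        ∏ i, ((1 : Matrix (Fin n) (Fin n) R) -
          lam • (Matrix.diagonal ε * σ.permMatrix R)) ((cycProd σ S)⁻¹ i) i
      = (∏ c ∈ S, -((∏ i ∈ c.support, ε i) * lam ^ c.support.card)) *
          ∏ i ∈ Finset.univ \ σ.support, (1 - ε i * lam) := by
  have hSsub : S ∩ σ.cycleFactorsFinset = S := Finset.inter_eq_left.2 hS
  set τ := (cycProd σ S)⁻¹ with hτdef
  set K := S.biUnion Equiv.Perm.support with hKdef
  have hK : τ.support = K := by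
    rw [hτdef, Equiv.Perm.support_inv, cycProd_support, hSsub]
  have hKσ : K ⊆ σ.support := by
    refine Finset.biUnion_subset.2 fun c hc => ?_
    exact Equiv.Perm.mem_cycleFactorsFinset_support_le (hS hc)
  have hker : ∀ i ∈ K, τ i = σ⁻¹ i := by
    intro i hi
    refine cycProd_inv_apply_mem σ S ?_
    rw [cycProd_support, hSsub]
    exact hi
  have hfix : ∀ i, i ∉ K → τ i = i := by
    intro i hi
    rw [← hK] at hi
    exact Equiv.Perm.notMem_support.1 hi
  set A := ((1 : Matrix (Fin n) (Fin n) R) -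
      lam • (Matrix.diagonal ε * σ.permMatrix R)) with hA
  -- entries on K
  have hentK : ∀ i ∈ K, A (τ i) i = -(lam * ε (τ i)) := by
    intro i hi
    rw [hA, entry_eq, hker i hi]
    have h1 : σ⁻¹ i ≠ i := by
      intro h
      have : σ i = i := by conv_lhs => rw [← h, perm_apply_inv_self σ]
      exact Equiv.Perm.mem_support.1 (hKσ hi) this
    rw [if_neg h1, if_pos (perm_apply_inv_self σ i).symm]
    ring
  have hentFix : ∀ i, i ∉ σ.support → A (τ i) i = 1 - lam * ε i := by
    intro i hi
    have hik : i ∉ K := fun h => hi (hKσ h)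
    rw [hA, entry_eq, hfix i hik, if_pos rfl,
      if_pos (Equiv.Perm.notMem_support.1 hi).symm]
    ring
  have hentOne : ∀ i, i ∈ σ.support → i ∉ K → A (τ i) i = 1 := by
    intro i hi hik
    rw [hA, entry_eq, hfix i hik, if_pos rfl,
      if_neg (fun h => Equiv.Perm.mem_support.1 hi h.symm)]
    ring
  -- split the product
  have hsplit : Finset.univ \ K = (Finset.univ \ σ.support) ∪ (σ.support \ K) := by
    ext i
    simp only [Finset.mem_sdiff, Finset.mem_univ, true_and, Finset.mem_union]
    constructor
    · intro h
      by_cases hs : i ∈ σ.support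
      · exact Or.inr ⟨hs, h⟩
      · exact Or.inl hs
    · rintro (h | ⟨_, h⟩)
      · exact fun hk => h (hKσ hk)
      · exact h
  have hdisj : Disjoint (Finset.univ \ σ.support) (σ.support \ K) := by
    rw [Finset.disjoint_left]
    intro a ha hb
    exact (Finset.mem_sdiff.1 ha).2 (Finset.mem_sdiff.1 hb).1
  have hprod : ∏ i, A (τ i) i
      = (∏ i ∈ Finset.univ \ σ.support, (1 - lam * ε i)) *
          ∏ i ∈ K, -(lam * ε (τ i)) := by
    rw [← Finset.prod_sdiff (Finset.subset_univ K)]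
    congr 1
    · rw [hsplit, Finset.prod_union hdisj]
      rw [Finset.prod_congr rfl fun i hi =>
        hentFix i (Finset.mem_sdiff.1 hi).2]
      rw [Finset.prod_congr rfl fun i hi =>
        hentOne i (Finset.mem_sdiff.1 hi).1 (Finset.mem_sdiff.1 hi).2]
      simp
    · exact Finset.prod_congr rfl hentK
  -- reindex the K product by τ
  have hre : ∏ i ∈ K, -(lam * ε (τ i)) = ∏ i ∈ K, -(lam * ε i) := by
    refine Equiv.Perm.prod_comp τ K (fun x => -(lam * ε x)) ?_
    intro a ha
    have : a ∈ τ.support := Equiv.Perm.mem_support.2 ha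
    rw [hK] at this
    exact this
  -- pairwise disjoint supports over S
  have hpwd : (↑S : Set (Perm (Fin n))).PairwiseDisjoint Equiv.Perm.support := by
    intro a ha b hb hab
    exact (σ.cycleFactorsFinset_pairwise_disjoint (hS ha) (hS hb) hab).disjoint_support
  have hbi : ∏ i ∈ K, -(lam * ε i)
      = ∏ c ∈ S, ∏ i ∈ c.support, -(lam * ε i) := by
    rw [hKdef]
    exact Finset.prod_biUnion hpwd
  -- sign
  have hsign : Equiv.Perm.sign τ = ∏ c ∈ S, Equiv.Perm.sign c := by
    rw [hτdef, map_inv, sign_cycProd σ S hS]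
    simp
  rw [hprod, hre, hbi, hsign]
  rw [Units.smul_def, zsmul_eq_mul]
  push_cast
  have hcyc : ∀ c ∈ S,
      ((Equiv.Perm.sign c : ℤ) : R) * ∏ i ∈ c.support, -(lam * ε i)
        = -((∏ i ∈ c.support, ε i) * lam ^ c.support.card) := by
    intro c hc
    have hc2 : c.IsCycle := (Equiv.Perm.mem_cycleFactorsFinset_iff.1 (hS hc)).1
    have h1 : ((Equiv.Perm.sign c : ℤ) : R) = -(-1 : R) ^ c.support.card := by
      rw [hc2.sign]
      push_cast
      ring
    have h2 : ∏ i ∈ c.support, -(lam * ε i)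
        = (-1 : R) ^ c.support.card * lam ^ c.support.card *
            ∏ i ∈ c.support, ε i := by
      calc ∏ i ∈ c.support, -(lam * ε i)
          = ∏ i ∈ c.support, (((-1 : R) * lam) * ε i) := by
            refine Finset.prod_congr rfl fun i _ => by ring
        _ = (∏ _i ∈ c.support, ((-1 : R) * lam)) * ∏ i ∈ c.support, ε i :=
            Finset.prod_mul_distrib
        _ = ((-1 : R) * lam) ^ c.support.card * ∏ i ∈ c.support, ε i := by
            rw [Finset.prod_const]
        _ = (-1 : R) ^ c.support.card * lam ^ c.support.card *
            ∏ i ∈ c.support, ε i := by rw [mul_pow]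
    rw [h1, h2]
    have h3 : ((-1 : R)) ^ c.support.card * (-1 : R) ^ c.support.card = 1 := by
      rw [← mul_pow]
      norm_num
    calc -(-1 : R) ^ c.support.card *
          ((-1 : R) ^ c.support.card * lam ^ c.support.card *
            ∏ i ∈ c.support, ε i)
        = -(((-1 : R)) ^ c.support.card * (-1 : R) ^ c.support.card) *
            (lam ^ c.support.card * ∏ i ∈ c.support, ε i) := by ring
      _ = -((∏ i ∈ c.support, ε i) * lam ^ c.support.card) := by
          rw [h3]; ring
  have hmerge : (∏ c ∈ S, ((Equiv.Perm.sign c : ℤ) : R)) *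
      ∏ c ∈ S, ∏ i ∈ c.support, -(lam * ε i)
        = ∏ c ∈ S, -((∏ i ∈ c.support, ε i) * lam ^ c.support.card) := by
    rw [← Finset.prod_mul_distrib]
    exact Finset.prod_congr rfl hcyc
  have hfix2 : ∏ i ∈ Finset.univ \ σ.support, (1 - lam * ε i)
      = ∏ i ∈ Finset.univ \ σ.support, (1 - ε i * lam) :=
    Finset.prod_congr rfl (fun i _ => by ring)
  rw [hfix2, ← hmerge]
  ring

end DetSignedPermAux

/-- **Characteristic polynomial of a signed permutation matrix.**
For `ε : Fin n → R` with values in `{1, −1}` and `σ ∈ S_n`,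
`det(I_n − λ·D_ε·M_σ) = ∏_c (1 − s(c)·λ^{ℓ(c)})`, the product over the cycles `c`
of `σ` (fixed points counted as cycles of length 1), where `ℓ(c)` is the length
of `c` and `s(c) = ∏_{i ∈ c} ε i` is the sign of the cycle. -/
theorem det_one_sub_smul_signedPermMatrix {R : Type*} [CommRing R] (n : ℕ) (lam : R)
    (σ : Equiv.Perm (Fin n)) (ε : Fin n → R) (hε : ∀ i, ε i = 1 ∨ ε i = -1) :
    ((1 : Matrix (Fin n) (Fin n) R) -
        lam • (Matrix.diagonal ε * σ.permMatrix R)).det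
      = (∏ c ∈ σ.cycleFactorsFinset,
            (1 - (∏ i ∈ c.support, ε i) * lam ^ c.support.card)) *
          ∏ i ∈ Finset.univ \ σ.support, (1 - ε i * lam) := by
  classical
  have expand : (∏ c ∈ σ.cycleFactorsFinset,
      (1 - (∏ i ∈ c.support, ε i) * lam ^ c.support.card))
      = ∑ S ∈ σ.cycleFactorsFinset.powerset,
          ∏ c ∈ S, -((∏ i ∈ c.support, ε i) * lam ^ c.support.card) := by
    have h := Finset.prod_add
      (fun c : Equiv.Perm (Fin n) =>
        -((∏ i ∈ c.support, ε i) * lam ^ c.support.card))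
      (fun _ => (1 : R)) σ.cycleFactorsFinset
    simp only [Finset.prod_const_one, mul_one] at h
    rw [← h]
    exact Finset.prod_congr rfl fun c _ => by ring
  rw [Matrix.det_apply, ← Finset.sum_filter_add_sum_filter_not Finset.univ
    (fun τ : Equiv.Perm (Fin n) => ∀ i, τ i = i ∨ σ (τ i) = i)]
  have hbad : ∑ τ ∈ Finset.univ.filter
      (fun τ : Equiv.Perm (Fin n) => ¬ ∀ i, τ i = i ∨ σ (τ i) = i),
      Equiv.Perm.sign τ •
        ∏ i, ((1 : Matrix (Fin n) (Fin n) R) -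
          lam • (Matrix.diagonal ε * σ.permMatrix R)) (τ i) i = 0 := by
    refine Finset.sum_eq_zero fun τ hτ => ?_
    obtain ⟨i, hi⟩ := not_forall.1 ((Finset.mem_filter.1 hτ).2)
    push_neg at hi
    have h0 : ((1 : Matrix (Fin n) (Fin n) R) -
        lam • (Matrix.diagonal ε * σ.permMatrix R)) (τ i) i = 0 := by
      rw [DetSignedPermAux.entry_eq, if_neg hi.1,
        if_neg (fun h => hi.2 h.symm)]
      ring
    rw [Finset.prod_eq_zero (f := fun j : Fin n =>
      ((1 : Matrix (Fin n) (Fin n) R) -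
        lam • (Matrix.diagonal ε * σ.permMatrix R)) (τ j) j)
      (Finset.mem_univ i) h0, smul_zero]
  rw [hbad, add_zero, expand, Finset.sum_mul]
  refine Finset.sum_nbij'
    (i := fun τ => σ.cycleFactorsFinset.filter fun c => c.support ⊆ τ.support)
    (j := fun S => (DetSignedPermAux.cycProd σ S)⁻¹)
    (fun τ hτ => Finset.mem_powerset.2 (Finset.filter_subset _ _))
    (fun S hS => Finset.mem_filter.2
      ⟨Finset.mem_univ _, DetSignedPermAux.good_cycProd_inv σ S⟩)
    (fun τ hτ => DetSignedPermAux.cycProd_filter_eq σ τ ((Finset.mem_filter.1 hτ).2))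
    (fun S hS => DetSignedPermAux.filter_cycProd σ S (Finset.mem_powerset.1 hS))
    (fun τ hτ => ?_)
  have hg := (Finset.mem_filter.1 hτ).2
  have he := DetSignedPermAux.cycProd_filter_eq σ τ hg
  conv_lhs => rw [← he]
  exact DetSignedPermAux.term_eq lam σ ε _ (Finset.filter_subset _ _)
end

section
/- Let n ≥ 1 and r ≥ 1, and consider the polynomial q(X) = ∑_{σ ∈ S_n} det(I_n − X·M_σ)^r in ℚ[X]. Then (1 − X)^r divides q(X), and the quotient polynomial q(X)/(1 − X)^r takes the value n!·n^{r−1} at X = 1. (This computes the Euler characteristic χ(ℳ_r SL(n,ℂ)) = n^{r−1} of the SL(n,ℂ)-character variety of ℤ^r.) -/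
open Polynomial Matrix Equiv Finset

namespace EulerAux

set_option linter.unusedSectionVars false
set_option linter.unusedVariables false

variable {α : Type*} [Fintype α] [DecidableEq α]

lemma entry (σ : Equiv.Perm α) (i j : α) :
    ((1 : Matrix α α (Polynomial ℚ)) - (X : Polynomial ℚ) • σ.permMatrix (Polynomial ℚ)) i j
      = (if i = j then 1 else 0) - X * (if σ i = j then 1 else 0) := by
  simp [Matrix.one_apply, Equiv.toPEquiv_apply, PEquiv.toMatrix_apply]

noncomputable def dd (σ : Equiv.Perm α) : Polynomial ℚ :=
  ((1 : Matrix α α (Polynomial ℚ)) - (X : Polynomial ℚ) • σ.permMatrix (Polynomial ℚ)).det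

lemma dd_eval_one (σ : Equiv.Perm α) :
    (dd σ).eval 1 = ((1 : Matrix α α ℚ) - σ.permMatrix ℚ).det := by
  have h := RingHom.map_det (evalRingHom (1:ℚ))
    ((1 : Matrix α α (Polynomial ℚ)) - (X : Polynomial ℚ) • σ.permMatrix (Polynomial ℚ))
  have h2 : (((1 : Matrix α α (Polynomial ℚ)) - (X : Polynomial ℚ) • σ.permMatrix (Polynomial ℚ)).map
      (evalRingHom (1:ℚ))) = (1 : Matrix α α ℚ) - σ.permMatrix ℚ := by
    ext i j
    rw [Matrix.map_apply, entry]
    simp [Matrix.one_apply, Equiv.toPEquiv_apply, PEquiv.toMatrix_apply, apply_ite (eval (1:ℚ))]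
  have h3 : (dd σ).eval 1 = (evalRingHom (1:ℚ)) (dd σ) := rfl
  rw [h3, dd, h, RingHom.mapMatrix_apply, h2]

lemma one_sub_X_dvd [Nonempty α] (σ : Equiv.Perm α) : (1 - X) ∣ dd σ := by
  have hroot : (dd σ).IsRoot 1 := by
    rw [IsRoot, dd_eval_one]
    rw [← Matrix.exists_mulVec_eq_zero_iff]
    refine ⟨fun _ => 1, ?_, ?_⟩
    · intro h
      have := congrFun h (Classical.arbitrary α)
      simp at this
    · ext i
      simp [Matrix.mulVec, dotProduct, Matrix.sub_apply, Matrix.one_apply,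
        Equiv.toPEquiv_apply, PEquiv.toMatrix_apply]
  have := (Polynomial.dvd_iff_isRoot (p := dd σ) (a := (1:ℚ))).mpr hroot
  have hneg : (1 - X : Polynomial ℚ) = -(X - C 1) := by rw [C_1]; ring
  rw [hneg]
  exact (neg_dvd).mpr this

lemma dd_transitive {n : ℕ} (hn : 1 ≤ n) (σ : Equiv.Perm (Fin n))
    (hσ : ∀ x y, σ.SameCycle x y) : dd σ = 1 - X ^ n := by
  rcases Nat.lt_or_ge n 2 with h2 | h2
  · have hn1 : n = 1 := by omega
    subst hn1
    have hσ1 : σ = 1 := Subsingleton.elim σ 1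
    subst hσ1
    rw [dd, Matrix.det_fin_one, entry]
    simp
  · have hpos : 0 < n := by omega
    set z : Fin n := ⟨0, hpos⟩ with hz
    have hfix : ∀ x, σ x ≠ x := by
      intro x hx
      obtain ⟨y, hy⟩ := Fintype.exists_ne_of_one_lt_card (by simp; omega) x
      obtain ⟨k, hk⟩ := hσ x y
      rw [Equiv.Perm.zpow_apply_eq_self_of_apply_eq_self hx] at hk
      exact hy hk.symm
    have hσne : σ ≠ 1 := fun h => hfix z (by simp [h])
    have hcyc : σ.IsCycle := ⟨z, hfix z, fun y _ => hσ z y⟩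
    have hsup : σ.support = Finset.univ := by
      ext x; simp [Equiv.Perm.mem_support, hfix x]
    have hinvne : σ⁻¹ ≠ 1 := fun h => hσne (by simpa using congrArg (·⁻¹) h)
    have hvan : ∀ τ ∈ (Finset.univ : Finset (Equiv.Perm (Fin n))),
        τ ∉ ({1, σ⁻¹} : Finset (Equiv.Perm (Fin n))) →
        (Equiv.Perm.sign τ •
          ∏ i, ((1 : Matrix (Fin n) (Fin n) (Polynomial ℚ)) -
            (X : Polynomial ℚ) • σ.permMatrix (Polynomial ℚ)) (τ i) i) = 0 := by
      intro τ _ hτ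
      simp only [Finset.mem_insert, Finset.mem_singleton] at hτ
      push_neg at hτ
      obtain ⟨hτ1, hτ2⟩ := hτ
      have hex : ∃ i, τ i ≠ i ∧ σ (τ i) ≠ i := by
        by_contra hcon
        push_neg at hcon
        have hone : ∀ i, τ i = i ∨ τ i = σ⁻¹ i := by
          intro i
          rcases eq_or_ne (τ i) i with h | h
          · exact Or.inl h
          · right
            have h' := hcon i h
            have h'' : σ⁻¹ (σ (τ i)) = τ i := Equiv.symm_apply_apply σ (τ i)
            rw [← h'', h']
        obtain ⟨a, ha⟩ : ∃ a, τ a ≠ a := by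
          by_contra hc; push_neg at hc
          exact hτ1 (Equiv.ext hc)
        set S : Finset (Fin n) := Finset.univ.filter (fun i => τ i = σ⁻¹ i) with hS
        have haS : a ∈ S := by
          simp only [hS, Finset.mem_filter, Finset.mem_univ, true_and]
          exact (hone a).resolve_left ha
        have hSinv : ∀ i ∈ S, σ⁻¹ i ∈ S := by
          intro i hi
          simp only [hS, Finset.mem_filter, Finset.mem_univ, true_and] at hi ⊢
          rcases hone (σ⁻¹ i) with h | h
          · exfalso
            have heq : σ⁻¹ i = i := τ.injective (by rw [h, hi])
            exact hfix i (by simpa using (congrArg σ heq).symm)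
          · exact h
        have himg : S.image (⇑σ⁻¹) = S := by
          apply Finset.eq_of_subset_of_card_le
          · intro x hx
            obtain ⟨y, hy, rfl⟩ := Finset.mem_image.mp hx
            exact hSinv y hy
          · rw [Finset.card_image_of_injective _ (Equiv.injective _)]
        have hSfwd : ∀ i ∈ S, σ i ∈ S := by
          intro i hi
          rw [← himg] at hi
          obtain ⟨y, hy, hyi⟩ := Finset.mem_image.mp hi
          have : y = σ i := by rw [← hyi]; simp
          rwa [← this]
        have hpow : ∀ k : ℕ, (σ ^ k) a ∈ S := by
          intro k
          induction k with
          | zero => simpa using haS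
          | succ m ih =>
            have : (σ ^ (m + 1)) a = σ ((σ ^ m) a) := by
              rw [pow_succ', Equiv.Perm.mul_apply]
            rw [this]
            exact hSfwd _ ih
        have hall : ∀ x, τ x = σ⁻¹ x := by
          intro x
          obtain ⟨k, _, hk⟩ := (hσ a x).exists_pow_eq'
          have := hpow k
          rw [hk] at this
          simpa [hS, Finset.mem_filter] using this
        exact hτ2 (Equiv.ext hall)
      obtain ⟨i, hi1, hi2⟩ := hex
      rw [Finset.prod_eq_zero (Finset.mem_univ i), smul_zero]
      rw [entry, if_neg hi1, if_neg hi2]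
      ring
    rw [dd, Matrix.det_apply, ← Finset.sum_subset (Finset.subset_univ _) hvan,
      Finset.sum_pair (Ne.symm hinvne)]
    have hterm1 : (Equiv.Perm.sign (1 : Equiv.Perm (Fin n)) •
        ∏ i, ((1 : Matrix (Fin n) (Fin n) (Polynomial ℚ)) -
          (X : Polynomial ℚ) • σ.permMatrix (Polynomial ℚ)) ((1 : Equiv.Perm (Fin n)) i) i)
        = 1 := by
      have : ∀ i : Fin n, ((1 : Matrix (Fin n) (Fin n) (Polynomial ℚ)) -
          (X : Polynomial ℚ) • σ.permMatrix (Polynomial ℚ)) ((1 : Equiv.Perm (Fin n)) i) i = 1 := by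
        intro i
        rw [Equiv.Perm.one_apply, entry, if_pos rfl, if_neg (hfix i)]
        ring
      rw [Finset.prod_congr rfl (fun i _ => this i), Finset.prod_const, one_pow]
      simp
    have hterm2 : (Equiv.Perm.sign (σ⁻¹ : Equiv.Perm (Fin n)) •
        ∏ i, ((1 : Matrix (Fin n) (Fin n) (Polynomial ℚ)) -
          (X : Polynomial ℚ) • σ.permMatrix (Polynomial ℚ)) ((σ⁻¹ : Equiv.Perm (Fin n)) i) i)
        = -X ^ n := by
      have hE : ∀ i : Fin n, ((1 : Matrix (Fin n) (Fin n) (Polynomial ℚ)) -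
          (X : Polynomial ℚ) • σ.permMatrix (Polynomial ℚ)) (σ⁻¹ i) i = -X := by
        intro i
        have h1 : σ⁻¹ i ≠ i := by
          intro h
          exact hfix i (by simpa using (congrArg σ h).symm)
        rw [entry, if_neg h1, if_pos (by simp : σ (σ⁻¹ i) = i)]
        ring
      have hprod : (∏ i : Fin n, ((1 : Matrix (Fin n) (Fin n) (Polynomial ℚ)) -
          (X : Polynomial ℚ) • σ.permMatrix (Polynomial ℚ)) (σ⁻¹ i) i) = (-X) ^ n := by
        rw [Finset.prod_congr rfl (fun i _ => hE i), Finset.prod_const, Finset.card_univ,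
          Fintype.card_fin]
      rw [hprod]
      have hsgn : Equiv.Perm.sign σ⁻¹ = -(-1) ^ n := by
        rw [Equiv.Perm.sign_inv, hcyc.sign, hsup, Finset.card_univ, Fintype.card_fin]
      rw [hsgn]
      have hcast : ((-(-1) ^ n : ℤˣ) : ℤ) = -(-1) ^ n := by simp
      rw [Units.smul_def, hcast, zsmul_eq_mul]
      push_cast
      rw [neg_pow (X : Polynomial ℚ) n, ← mul_assoc]
      have : (-(-1) ^ n : Polynomial ℚ) * (-1) ^ n = -1 := by
        rw [neg_mul, ← mul_pow]
        norm_num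
      rw [this]
      ring
    rw [hterm1, hterm2]
    ring

lemma sq_dvd {n : ℕ} (hn : 1 ≤ n) (σ : Equiv.Perm (Fin n))
    (hσ : ¬ ∀ x y, σ.SameCycle x y) : (1 - X) ^ 2 ∣ dd σ := by
  push_neg at hσ
  obtain ⟨a, b, hab⟩ := hσ
  set p : Fin n → Prop := fun x => σ.SameCycle a x with hp
  have hdec : DecidablePred p := fun x => Equiv.Perm.instDecidableRelSameCycle σ a x
  have hinv : ∀ x, p x ↔ p (σ x) := fun x => (Equiv.Perm.sameCycle_apply_right).symm
  have hinv' : ∀ x, ¬ p x ↔ ¬ p (σ x) := fun x => not_congr (hinv x)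
  let σ₁ : Equiv.Perm {x // p x} := σ.subtypePerm (fun x => (hinv x).symm)
  let σ₂ : Equiv.Perm {x // ¬ p x} := σ.subtypePerm (fun x => (hinv' x).symm)
  let e : {x // p x} ⊕ {x // ¬ p x} ≃ Fin n := Equiv.sumCompl p
  have hblock :
      (((1 : Matrix (Fin n) (Fin n) (Polynomial ℚ)) -
        (X : Polynomial ℚ) • σ.permMatrix (Polynomial ℚ)).submatrix e e)
      = Matrix.fromBlocks
          ((1 : Matrix {x // p x} {x // p x} (Polynomial ℚ)) -
            (X : Polynomial ℚ) • σ₁.permMatrix (Polynomial ℚ)) 0 0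
          ((1 : Matrix {x // ¬ p x} {x // ¬ p x} (Polynomial ℚ)) -
            (X : Polynomial ℚ) • σ₂.permMatrix (Polynomial ℚ)) := by
    ext i j
    cases i with
    | inl i =>
      cases j with
      | inl j =>
        rw [Matrix.submatrix_apply, Equiv.sumCompl_apply_inl, Equiv.sumCompl_apply_inl, entry]
        rw [Matrix.fromBlocks_apply₁₁, entry]
        simp [Subtype.ext_iff, σ₁]
      | inr j =>
        rw [Matrix.submatrix_apply, Equiv.sumCompl_apply_inl, Equiv.sumCompl_apply_inr, entry]
        rw [Matrix.fromBlocks_apply₁₂]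
        have h1 : (i : Fin n) ≠ (j : Fin n) := fun h => j.2 (h ▸ i.2)
        have h2 : σ (i : Fin n) ≠ (j : Fin n) := fun h => j.2 (h ▸ (hinv _).mp i.2)
        rw [if_neg h1, if_neg h2]
        simp
    | inr i =>
      cases j with
      | inl j =>
        rw [Matrix.submatrix_apply, Equiv.sumCompl_apply_inr, Equiv.sumCompl_apply_inl, entry]
        rw [Matrix.fromBlocks_apply₂₁]
        have h1 : (i : Fin n) ≠ (j : Fin n) := fun h => i.2 (h ▸ j.2)
        have h2 : σ (i : Fin n) ≠ (j : Fin n) := fun h => i.2 ((hinv _).mpr (h ▸ j.2))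
        rw [if_neg h1, if_neg h2]
        simp
      | inr j =>
        rw [Matrix.submatrix_apply, Equiv.sumCompl_apply_inr, Equiv.sumCompl_apply_inr, entry]
        rw [Matrix.fromBlocks_apply₂₂, entry]
        simp [Subtype.ext_iff, σ₂]
  have hdet : dd σ = dd σ₁ * dd σ₂ := by
    rw [dd, ← Matrix.det_submatrix_equiv_self e, hblock, Matrix.det_fromBlocks_zero₁₂]
    rfl
  have hne1 : Nonempty {x // p x} := ⟨⟨a, Equiv.Perm.SameCycle.refl σ a⟩⟩
  have hne2 : Nonempty {x // ¬ p x} := ⟨⟨b, hab⟩⟩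
  rw [hdet, sq]
  exact mul_dvd_mul (one_sub_X_dvd σ₁) (one_sub_X_dvd σ₂)

lemma card_transitive {n : ℕ} (hn : 1 ≤ n) :
    (Finset.univ.filter (fun σ : Equiv.Perm (Fin n) => ∀ x y, σ.SameCycle x y)).card
      = (n - 1).factorial := by
  rcases Nat.lt_or_ge n 2 with h2 | h2
  · have hn1 : n = 1 := by omega
    subst hn1
    rw [Finset.filter_true_of_mem (fun σ _ => fun x y => by
      rw [Subsingleton.elim x y])]
    simp [Finset.card_univ]
  · obtain ⟨m, rfl⟩ : ∃ m, n = m + 2 := ⟨n - 2, by omega⟩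
    set c : Equiv.Perm (Fin (m + 2)) := finRotate (m + 2) with hcdef
    have hc : c.IsCycle := isCycle_finRotate
    have hsupc : c.support = Finset.univ := support_finRotate
    have htransc : ∀ x y : Fin (m + 2), c.SameCycle x y := by
      intro x y
      refine hc.sameCycle ?_ ?_ <;>
        · rw [← Equiv.Perm.mem_support, hsupc]; exact Finset.mem_univ _
    have hcard :
        (Finset.univ.filter (fun g : Equiv.Perm (Fin (m + 2)) => g 0 = 0)).card
          = (m + 1).factorial := by
      rw [← Fintype.card_subtype]
      have e1 : {g : Equiv.Perm (Fin (m + 2)) // g 0 = 0}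
          ≃ Equiv.Perm {x : Fin (m + 2) // x ≠ 0} := by
        refine (Equiv.subtypeEquivRight ?_).trans
          (Equiv.Perm.subtypeEquivSubtypePerm (fun x : Fin (m + 2) => x ≠ 0)).symm
        intro g
        constructor
        · intro h a ha
          have : a = 0 := not_not.mp ha
          subst this; exact h
        · intro h
          exact h 0 (not_not.mpr rfl)
      rw [Fintype.card_congr e1, Fintype.card_perm]
      congr 1
      have : Fintype.card {x : Fin (m + 2) // x ≠ 0}
          = Fintype.card {x : Fin (m + 2) // ¬ x = 0} := rfl
      rw [this, Fintype.card_subtype_compl, Fintype.card_subtype_eq, Fintype.card_fin]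
      omega
    have hbij :
        (Finset.univ.filter (fun g : Equiv.Perm (Fin (m + 2)) => g 0 = 0)).card
          = (Finset.univ.filter
              (fun σ : Equiv.Perm (Fin (m + 2)) => ∀ x y, σ.SameCycle x y)).card := by
      refine Finset.card_bij (fun g _ => g * c * g⁻¹) ?_ ?_ ?_
      · -- maps into transitive
        intro g hg
        simp only [Finset.mem_filter, Finset.mem_univ, true_and]
        intro x y
        obtain ⟨k, hk⟩ := htransc (g⁻¹ x) (g⁻¹ y)
        refine ⟨k, ?_⟩
        rw [conj_zpow]
        simp only [Equiv.Perm.mul_apply]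
        rw [hk]
        exact g.apply_symm_apply y
      · -- injective
        intro g₁ hg₁ g₂ hg₂ heq
        simp only [Finset.mem_filter, Finset.mem_univ, true_and] at hg₁ hg₂
        replace heq : g₁ * c * g₁⁻¹ = g₂ * c * g₂⁻¹ := heq
        have hcom : (g₂⁻¹ * g₁) * c = c * (g₂⁻¹ * g₁) := by
          calc (g₂⁻¹ * g₁) * c = g₂⁻¹ * (g₁ * c * g₁⁻¹) * g₁ := by group
          _ = g₂⁻¹ * (g₂ * c * g₂⁻¹) * g₁ := by rw [heq]
          _ = c * (g₂⁻¹ * g₁) := by group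
        obtain ⟨hc', hz⟩ := hc.commute_iff.mp hcom
        have hofs : Equiv.Perm.ofSubtype ((g₂⁻¹ * g₁).subtypePerm hc') = g₂⁻¹ * g₁ := by
          ext x
          have hx : x ∈ c.support := by rw [hsupc]; exact Finset.mem_univ x
          rw [Equiv.Perm.ofSubtype_apply_of_mem _ hx]
          rfl
        rw [hofs] at hz
        obtain ⟨k, hk⟩ := Subgroup.mem_zpowers_iff.mp hz
        have h0 : (g₂⁻¹ * g₁) 0 = 0 := by
          rw [Equiv.Perm.mul_apply, hg₁]
          apply g₂.injective
          rw [show g₂ (g₂⁻¹ 0) = 0 from g₂.apply_symm_apply 0, hg₂]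
        have hcnefix : c 0 ≠ 0 := by
          rw [← Equiv.Perm.mem_support, hsupc]; exact Finset.mem_univ _
        have hk0 : (c ^ k) 0 = 0 := by rw [hk]; exact h0
        have hmod := (Equiv.Perm.cycle_zpow_mem_support_iff hc hcnefix).mp hk0
        have hdvd : ((orderOf c : ℤ)) ∣ k := by
          rw [hc.orderOf]
          exact Int.dvd_of_emod_eq_zero hmod
        have hck : c ^ k = 1 := orderOf_dvd_iff_zpow_eq_one.mp hdvd
        have : g₂⁻¹ * g₁ = 1 := by rw [← hk, hck]
        calc g₁ = g₂ * (g₂⁻¹ * g₁) := by group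
        _ = g₂ := by rw [this]; group
      · -- surjective
        intro σ hσ
        simp only [Finset.mem_filter, Finset.mem_univ, true_and] at hσ
        have hfixσ : ∀ x, σ x ≠ x := by
          intro x hx
          obtain ⟨y, hy⟩ := Fintype.exists_ne_of_one_lt_card (by simp) x
          obtain ⟨k, hk⟩ := hσ x y
          rw [Equiv.Perm.zpow_apply_eq_self_of_apply_eq_self hx] at hk
          exact hy hk.symm
        have hcycσ : σ.IsCycle := ⟨0, hfixσ 0, fun y _ => hσ 0 y⟩
        have hsupσ : σ.support = Finset.univ := by
          ext x; simp [Equiv.Perm.mem_support, hfixσ x]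
        have hconj : IsConj c σ := by
          rw [Equiv.Perm.isConj_iff_cycleType_eq, hc.cycleType, hcycσ.cycleType, hsupc, hsupσ]
        obtain ⟨g, hg⟩ := isConj_iff.mp hconj
        obtain ⟨k, hk⟩ := htransc 0 (g⁻¹ 0)
        refine ⟨g * c ^ k, ?_, ?_⟩
        · simp only [Finset.mem_filter, Finset.mem_univ, true_and]
          rw [Equiv.Perm.mul_apply, hk]
          exact g.apply_symm_apply 0
        · rw [← hg]
          have : c ^ k * c * (c ^ k)⁻¹ = c := by group
          calc g * c ^ k * c * (g * c ^ k)⁻¹ = g * (c ^ k * c * (c ^ k)⁻¹) * g⁻¹ := by group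
          _ = g * c * g⁻¹ := by rw [this]
      
    rw [← hbij, hcard]
    norm_num

end EulerAux

/-- **Euler characteristic of the `SL(n,ℂ)`-character variety of `ℤ^r`.**
The polynomial `q(X) = ∑_{σ ∈ S_n} det(I_n − X·M_σ)^r ∈ ℚ[X]` is divisible by
`(1 − X)^r`, and the quotient evaluates at `X = 1` to `n!·n^{r−1}`
(so that `χ(ℳ_r SL(n,ℂ)) = n^{r−1}`). -/
theorem euler_char_SLn (n r : ℕ) (hn : 1 ≤ n) (hr : 1 ≤ r) :
    ∃ q' : Polynomial ℚ,
      (∑ σ : Equiv.Perm (Fin n),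
          ((1 : Matrix (Fin n) (Fin n) (Polynomial ℚ)) -
            (Polynomial.X : Polynomial ℚ) • σ.permMatrix (Polynomial ℚ)).det ^ r)
        = (1 - Polynomial.X) ^ r * q' ∧
      q'.eval 1 = (n.factorial : ℚ) * (n : ℚ) ^ (r - 1) := by
  classical
  have hne : Nonempty (Fin n) := ⟨⟨0, hn⟩⟩
  have hdvd : ∀ σ : Equiv.Perm (Fin n), ∃ cpol : Polynomial ℚ,
      EulerAux.dd σ = (1 - X) * cpol := fun σ => EulerAux.one_sub_X_dvd σ
  choose cc hcc using hdvd
  refine ⟨∑ σ : Equiv.Perm (Fin n), (cc σ) ^ r, ?_, ?_⟩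
  · rw [Finset.mul_sum]
    refine Finset.sum_congr rfl (fun σ _ => ?_)
    have hd : ((1 : Matrix (Fin n) (Fin n) (Polynomial ℚ)) -
        (Polynomial.X : Polynomial ℚ) • σ.permMatrix (Polynomial ℚ)).det = EulerAux.dd σ := rfl
    rw [hd, hcc σ, mul_pow]
  · have h1X : (1 - X : Polynomial ℚ) ≠ 0 := by
      intro h
      have := congrArg (eval 0) h
      simp at this
    have heval : ∀ σ : Equiv.Perm (Fin n),
        (cc σ).eval 1 = if (∀ x y, σ.SameCycle x y) then (n : ℚ) else 0 := by
      intro σ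
      split_ifs with ht
      · have hgeom : (1 - X : Polynomial ℚ) * (∑ i ∈ Finset.range n, X ^ i) = 1 - X ^ n := by
          have := geom_sum_mul (X : Polynomial ℚ) n
          linear_combination -this
        have hccσ : cc σ = ∑ i ∈ Finset.range n, X ^ i := by
          apply mul_left_cancel₀ h1X
          rw [← hcc σ, EulerAux.dd_transitive hn σ ht, hgeom]
        rw [hccσ]
        simp [eval_finset_sum]
      · have hsq := EulerAux.sq_dvd hn σ ht
        rw [hcc σ, sq] at hsq
        obtain ⟨e, he⟩ := (mul_dvd_mul_iff_left h1X).mp hsq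
        rw [he]
        simp
    rw [eval_finset_sum]
    simp_rw [eval_pow]
    rw [Finset.sum_congr rfl (fun σ _ => by rw [heval σ])]
    have hsplit : ∀ σ : Equiv.Perm (Fin n),
        (if (∀ x y, σ.SameCycle x y) then (n : ℚ) else 0) ^ r
          = if (∀ x y, σ.SameCycle x y) then (n : ℚ) ^ r else 0 := by
      intro σ
      split_ifs with h
      · rfl
      · exact zero_pow (by omega)
    rw [Finset.sum_congr rfl (fun σ _ => hsplit σ)]
    rw [Finset.sum_ite, Finset.sum_const_zero, add_zero, Finset.sum_const]
    rw [EulerAux.card_transitive hn, nsmul_eq_mul]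
    have hpow : (n : ℚ) ^ r = (n : ℚ) ^ (r - 1) * n := by
      conv_lhs => rw [show r = (r - 1) + 1 by omega]
      rw [pow_succ]
    have hfact : (((n - 1).factorial : ℚ)) * n = n.factorial := by
      have h := Nat.mul_factorial_pred (show n ≠ 0 by omega)
      push_cast [← h]
      ring
    calc ((n - 1).factorial : ℚ) * (n : ℚ) ^ r
        = (((n - 1).factorial : ℚ) * n) * (n : ℚ) ^ (r - 1) := by rw [hpow]; ring
    _ = (n.factorial : ℚ) * (n : ℚ) ^ (r - 1) := by rw [hfact]
end

section
/- Let n ≥ 1 and let λ be a variable (or an element of any commutative ring). Then ∑_{σ ∈ S_n} det(I_n + λ·M_σ)^2 = n!·(1 + λ)^2·(1 + λ^2 + λ^4 + ⋯ + λ^{2n−2}) = n!·(1+λ)^2·∑_{k=0}^{n−1} λ^{2k}. (Dividing by n! and setting λ = tuv, this gives the mixed Hodge polynomial of the GL(n,ℂ)-character variety of ℤ^2: μ(t,u,v) = (1+tuv)^2·(1+(tuv)^2+⋯+(tuv)^{2n−2}).) -/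
open Finset Equiv Matrix

namespace SumDetAux

variable {n : ℕ} {R : Type*} [CommRing R]

/-- matrix whose `i`-th row is the standard basis vector at `g i` -/
def rmat (R : Type*) [CommRing R] {n : ℕ} (g : Fin n → Fin n) : Matrix (Fin n) (Fin n) R :=
  Matrix.of fun i j => if g i = j then 1 else 0

lemma rmat_perm (e : Equiv.Perm (Fin n)) : rmat R ⇑e = e.permMatrix R := by
  ext i j
  simp [rmat, Equiv.Perm.permMatrix, PEquiv.toMatrix, Equiv.toPEquiv, eq_comm]

lemma det_rmat_of_not_inj (g : Fin n → Fin n) (h : ¬ Function.Injective g) :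
    (rmat R g).det = 0 := by
  simp only [Function.Injective, not_forall] at h
  obtain ⟨a, b, hab, hne⟩ := h
  refine Matrix.det_zero_of_row_eq hne ?_
  ext j
  simp [rmat, hab]

lemma det_rmat_sq (g : Fin n → Fin n) (h : Function.Injective g) :
    (rmat R g).det * (rmat R g).det = 1 := by
  obtain ⟨e, rfl⟩ : ∃ e : Equiv.Perm (Fin n), ⇑e = g :=
    ⟨Equiv.ofBijective g (Finite.injective_iff_bijective.mp h), rfl⟩
  rw [rmat_perm, Matrix.det_permutation]
  rw [← Int.cast_mul, ← Units.val_mul, Int.units_mul_self, Units.val_one, Int.cast_one]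

lemma det_rmat_comp_swap (g : Fin n → Fin n) (a b : Fin n) (hne : a ≠ b) :
    (rmat R (g ∘ ⇑(Equiv.swap a b))).det = - (rmat R g).det := by
  have h : rmat R (g ∘ ⇑(Equiv.swap a b)) = (rmat R g).submatrix (⇑(Equiv.swap a b)) id := rfl
  rw [h, Matrix.det_permute, Equiv.Perm.sign_swap hne]
  simp


/-- `σ` on `s`, identity elsewhere -/
def gfun (σ : Equiv.Perm (Fin n)) (s : Finset (Fin n)) : Fin n → Fin n :=
  fun i => if i ∈ s then σ i else i

noncomputable def w (R : Type*) [CommRing R] {n : ℕ} (σ : Equiv.Perm (Fin n))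
    (s : Finset (Fin n)) : R := (rmat R (gfun σ s)).det

lemma det_expand (σ : Equiv.Perm (Fin n)) (lam : R) :
    ((1 : Matrix (Fin n) (Fin n) R) + lam • σ.permMatrix R).det
      = ∑ s : Finset (Fin n), lam ^ s.card * w R σ s := by
  classical
  set m : Fin n → (Fin n → R) := fun i => lam • (fun j => if σ i = j then (1:R) else 0) with hm
  set m' : Fin n → (Fin n → R) := fun i => (fun j => if i = j then (1:R) else 0) with hm'
  have hM : ((1 : Matrix (Fin n) (Fin n) R) + lam • σ.permMatrix R) = Matrix.of (m + m') := by
    ext i j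
    simp [hm, hm', Matrix.one_apply, Equiv.Perm.permMatrix, PEquiv.toMatrix, Equiv.toPEquiv,
      eq_comm, add_comm]
  rw [hM]
  have hdet : ∀ X : Fin n → (Fin n → R), (Matrix.of X).det = Matrix.detRowAlternating X := fun _ => rfl
  have hexp := (Matrix.detRowAlternating : AlternatingMap R (Fin n → R) R (Fin n)).toMultilinearMap.map_add_univ m m'
  rw [AlternatingMap.coe_multilinearMap] at hexp
  rw [hdet, hexp]
  refine Finset.sum_congr rfl fun s _ => ?_
  have hbase : s.piecewise m m' =
      s.piecewise (fun i => lam • (s.piecewise (fun i => (fun j => if σ i = j then (1:R) else 0)) m') i)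
        (s.piecewise (fun i => (fun j => if σ i = j then (1:R) else 0)) m') := by
    funext i
    by_cases hi : i ∈ s
    · simp [Finset.piecewise_eq_of_mem _ _ _ hi, hm]
    · simp [Finset.piecewise_eq_of_notMem _ _ _ hi]
  have hsmul := (Matrix.detRowAlternating : AlternatingMap R (Fin n → R) R (Fin n)).toMultilinearMap.map_piecewise_smul
      (fun _ => lam) (s.piecewise (fun i => (fun j => if σ i = j then (1:R) else 0)) m') s
  rw [AlternatingMap.coe_multilinearMap] at hsmul
  rw [hbase, hsmul]
  have hrow : s.piecewise (fun i => (fun j => if σ i = j then (1:R) else 0)) m'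
      = fun i => (fun j => if gfun σ s i = j then (1:R) else 0) := by
    funext i
    by_cases hi : i ∈ s
    · simp [Finset.piecewise_eq_of_mem _ _ _ hi, gfun, hi]
    · simp [Finset.piecewise_eq_of_notMem _ _ _ hi, hm', gfun, hi]
  rw [hrow, Finset.prod_const, smul_eq_mul]
  rfl


/-- for a permutation, mapping `s` into `s` is the same as the membership equivalence -/
lemma mapsTo_iff_forall (σ : Equiv.Perm (Fin n)) (s : Finset (Fin n))
    (h : ∀ i ∈ s, σ i ∈ s) : ∀ i, σ i ∈ s ↔ i ∈ s := by
  have himg : s.image ⇑σ = s := by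
    apply Finset.eq_of_subset_of_card_le
    · intro j hj
      obtain ⟨i, hi, rfl⟩ := Finset.mem_image.mp hj
      exact h i hi
    · rw [Finset.card_image_of_injective _ σ.injective]
  intro i
  constructor
  · intro hsi
    rw [← himg] at hsi
    obtain ⟨j, hj, hji⟩ := Finset.mem_image.mp hsi
    rwa [← σ.injective hji]
  · exact h i

lemma gfun_inj_iff (σ : Equiv.Perm (Fin n)) (s : Finset (Fin n)) :
    Function.Injective (gfun σ s) ↔ ∀ i ∈ s, σ i ∈ s := by
  constructor
  · intro hinj i hi
    by_contra hni
    have h1 : gfun σ s i = σ i := if_pos hi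
    have h2 : gfun σ s (σ i) = σ i := if_neg hni
    have h3 : i = σ i := hinj (h1.trans h2.symm)
    exact hni (h3 ▸ hi)
  · intro h x y hxy
    have hiff := mapsTo_iff_forall σ s h
    unfold gfun at hxy
    by_cases hx : x ∈ s <;> by_cases hy : y ∈ s
    · rw [if_pos hx, if_pos hy] at hxy; exact σ.injective hxy
    · rw [if_pos hx, if_neg hy] at hxy
      exact absurd (hxy ▸ h x hx) hy
    · rw [if_neg hx, if_pos hy] at hxy
      exact absurd (hxy ▸ h y hy) hx
    · rwa [if_neg hx, if_neg hy] at hxy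

lemma w_eq_zero (σ : Equiv.Perm (Fin n)) (s : Finset (Fin n)) (h : ¬ ∀ i ∈ s, σ i ∈ s) :
    w R σ s = 0 :=
  det_rmat_of_not_inj _ (fun hinj => h ((gfun_inj_iff σ s).mp hinj))

lemma w_mul_self (σ : Equiv.Perm (Fin n)) (s : Finset (Fin n)) (h : ∀ i ∈ s, σ i ∈ s) :
    w R σ s * w R σ s = 1 :=
  det_rmat_sq _ ((gfun_inj_iff σ s).mpr h)

lemma gfun_mul_swap_mem (σ : Equiv.Perm (Fin n)) (s : Finset (Fin n)) {a b : Fin n}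
    (ha : a ∈ s) (hb : b ∈ s) :
    gfun (σ * Equiv.swap a b) s = gfun σ s ∘ ⇑(Equiv.swap a b) := by
  funext i
  by_cases hi : i ∈ s
  · have hsw : Equiv.swap a b i ∈ s := by
      by_cases h1 : i = a
      · simpa [h1, Equiv.swap_apply_left] using hb
      · by_cases h2 : i = b
        · simpa [h2, Equiv.swap_apply_right] using ha
        · simpa [Equiv.swap_apply_of_ne_of_ne h1 h2] using hi
    simp [gfun, hi, hsw, Equiv.Perm.mul_apply]
  · have h1 : i ≠ a := fun h => hi (h ▸ ha)
    have h2 : i ≠ b := fun h => hi (h ▸ hb)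
    simp [gfun, hi, Equiv.Perm.mul_apply, Equiv.swap_apply_of_ne_of_ne h1 h2]

lemma gfun_mul_swap_not_mem (σ : Equiv.Perm (Fin n)) (s : Finset (Fin n)) {a b : Fin n}
    (ha : a ∉ s) (hb : b ∉ s) :
    gfun (σ * Equiv.swap a b) s = gfun σ s := by
  funext i
  by_cases hi : i ∈ s
  · have h1 : i ≠ a := fun h => ha (h ▸ hi)
    have h2 : i ≠ b := fun h => hb (h ▸ hi)
    simp [gfun, hi, Equiv.Perm.mul_apply, Equiv.swap_apply_of_ne_of_ne h1 h2]
  · simp [gfun, hi]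

lemma gfun_insert_fix (σ : Equiv.Perm (Fin n)) (s : Finset (Fin n)) {a : Fin n}
    (ha : σ a = a) : gfun σ (insert a s) = gfun σ s := by
  funext i
  by_cases hia : i = a
  · subst hia
    by_cases hi : i ∈ s <;> simp [gfun, hi, ha]
  · simp [gfun, Finset.mem_insert, hia]

lemma sum_w_vanish_left (s t : Finset (Fin n)) (h : 2 ≤ (s \ t).card) :
    ∑ σ : Equiv.Perm (Fin n), w R σ s * w R σ t = 0 := by
  obtain ⟨a, ha, b, hb, hab⟩ := Finset.one_lt_card.mp h
  have has : a ∈ s := (Finset.mem_sdiff.mp ha).1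
  have hat : a ∉ t := (Finset.mem_sdiff.mp ha).2
  have hbs : b ∈ s := (Finset.mem_sdiff.mp hb).1
  have hbt : b ∉ t := (Finset.mem_sdiff.mp hb).2
  apply Finset.sum_ninvolution (g := fun σ => σ * Equiv.swap a b)
  · intro σ
    have h1 : w R (σ * Equiv.swap a b) s = - w R σ s := by
      unfold w
      rw [gfun_mul_swap_mem σ s has hbs, det_rmat_comp_swap _ a b hab]
    have h2 : w R (σ * Equiv.swap a b) t = w R σ t := by
      unfold w
      rw [gfun_mul_swap_not_mem σ t hat hbt]
    rw [h1, h2]; ring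
  · intro σ _ hcon
    have h1 : σ * Equiv.swap a b = σ * 1 := by rw [mul_one]; exact hcon
    have h2 : Equiv.swap a b = 1 := mul_left_cancel h1
    have h3 : Equiv.swap a b a = (1 : Equiv.Perm (Fin n)) a := by rw [h2]
    rw [Equiv.swap_apply_left] at h3
    exact hab h3.symm
  · intro σ; exact Finset.mem_univ _
  · intro σ
    rw [mul_assoc, Equiv.swap_mul_self, mul_one]


/-- permutations preserving the fibers of `f` are counted by the product of fiber factorials -/
lemma card_fiber_preserving {β : Type*} [DecidableEq β] [Fintype β] (f : Fin n → β) :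
    Fintype.card {σ : Equiv.Perm (Fin n) // ∀ x, f (σ x) = f x}
      = ∏ b : β, (Fintype.card {x : Fin n // f x = b}).factorial := by
  classical
  -- the map from families of fiber permutations to permutations
  let tf : (∀ b, Equiv.Perm {x : Fin n // f x = b}) → Fin n → Fin n :=
    fun π x => ↑(π (f x) ⟨x, rfl⟩)
  have aux : ∀ (π : ∀ b, Equiv.Perm {x : Fin n // f x = b}) (x : Fin n) (b : β)
      (hb : f x = b), (↑(π b ⟨x, hb⟩) : Fin n) = tf π x := by
    rintro π x b rfl; rfl
  have hf : ∀ π x, f (tf π x) = f x := fun π x => (π (f x) ⟨x, rfl⟩).2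
  have hinj : ∀ π, Function.Injective (tf π) := by
    intro π x y hxy
    have hb : f x = f y := by rw [← hf π x, ← hf π y, hxy]
    have h1 : (↑(π (f y) ⟨x, hb⟩) : Fin n) = tf π x := aux π x (f y) hb
    have h2 : (↑(π (f y) ⟨y, rfl⟩) : Fin n) = tf π y := aux π y (f y) rfl
    have h3 : π (f y) ⟨x, hb⟩ = π (f y) ⟨y, rfl⟩ := by
      apply Subtype.ext; rw [h1, h2, hxy]
    have := (π (f y)).injective h3
    exact congrArg Subtype.val this
  let Ψ : (∀ b, Equiv.Perm {x : Fin n // f x = b}) →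
      {σ : Equiv.Perm (Fin n) // ∀ x, f (σ x) = f x} :=
    fun π => ⟨Equiv.ofBijective (tf π) ((Finite.injective_iff_bijective).mp (hinj π)), hf π⟩
  have hΨinj : Function.Injective Ψ := by
    intro π π' h
    have happ : ∀ x, tf π x = tf π' x := by
      intro x
      have := congrArg (fun s => (s : Equiv.Perm (Fin n)) x) (Subtype.ext_iff.mp h)
      simpa [Ψ, Equiv.ofBijective] using this
    funext b
    ext ⟨x, hx⟩
    have e1 := aux π x b hx
    have e2 := aux π' x b hx
    have e3 : (↑(π b ⟨x, hx⟩) : Fin n) = ↑(π' b ⟨x, hx⟩) := by rw [e1, e2, happ]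
    exact congrArg Fin.val e3
  have hΨsurj : Function.Surjective Ψ := by
    rintro ⟨σ, hσ⟩
    refine ⟨fun b => σ.subtypePerm (fun x => ?_), ?_⟩
    · constructor
      · intro h; rw [← hσ x]; exact h
      · intro h; rw [hσ]; exact h
    · apply Subtype.ext
      ext x
      rfl
  rw [← Fintype.card_congr (Equiv.ofBijective Ψ ⟨hΨinj, hΨsurj⟩)]
  rw [Fintype.card_pi]
  exact Finset.prod_congr rfl fun b _ => Fintype.card_perm


lemma card_cond (u F : Finset (Fin n)) (hdisj : ∀ x ∈ F, x ∉ u) :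
    Fintype.card {σ : Equiv.Perm (Fin n) //
        (∀ x, σ x ∈ u ↔ x ∈ u) ∧ (∀ x ∈ F, σ x = x)}
      = u.card.factorial * (n - u.card - F.card).factorial := by
  classical
  set f : Fin n → Bool ⊕ Fin n :=
    fun x => if x ∈ u then Sum.inl true else if x ∈ F then Sum.inr x else Sum.inl false with hf
  have hcond : ∀ σ : Equiv.Perm (Fin n),
      ((∀ x, σ x ∈ u ↔ x ∈ u) ∧ (∀ x ∈ F, σ x = x)) ↔ (∀ x, f (σ x) = f x) := by
    intro σ
    constructor
    · rintro ⟨h1, h2⟩ x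
      by_cases hxu : x ∈ u
      · have : σ x ∈ u := (h1 x).mpr hxu
        simp [hf, hxu, this]
      · by_cases hxF : x ∈ F
        · rw [h2 x hxF]
        · have hsu : σ x ∉ u := fun h => hxu ((h1 x).mp h)
          have hsF : σ x ∉ F := by
            intro h
            have : σ (σ x) = σ x := h2 _ h
            have : σ x = x := σ.injective this
            exact hxF (this ▸ h)
          simp [hf, hxu, hxF, hsu, hsF]
    · intro h
      have hmem : ∀ x, σ x ∈ u ↔ x ∈ u := by
        intro x
        have hx := h x
        constructor
        · intro hs
          by_contra hxu
          by_cases hxF : x ∈ F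
          · simp [hf, hs, hxu, hxF] at hx
          · simp [hf, hs, hxu, hxF] at hx
        · intro hxu
          by_contra hs
          by_cases hsF : σ x ∈ F
          · simp [hf, hs, hxu, hsF] at hx
          · simp [hf, hs, hxu, hsF] at hx
      refine ⟨hmem, fun x hxF => ?_⟩
      have hxu : x ∉ u := hdisj x hxF
      have hsu : σ x ∉ u := fun hh => hxu ((hmem x).mp hh)
      have hx := h x
      by_cases hsF : σ x ∈ F
      · simp [hf, hsu, hsF, hxu, hxF] at hx
        exact hx
      · simp [hf, hsu, hsF, hxu, hxF] at hx
  rw [Fintype.card_congr (Equiv.subtypeEquivRight hcond), card_fiber_preserving]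
  rw [Fintype.prod_sum_type]
  have htrue : Fintype.card {x : Fin n // f x = Sum.inl true} = u.card := by
    rw [Fintype.card_congr (Equiv.subtypeEquivRight (q := fun x => x ∈ u) ?_), Fintype.card_coe]
    intro x
    by_cases hxu : x ∈ u
    · simp [hf, hxu]
    · by_cases hxF : x ∈ F <;> simp [hf, hxu, hxF]
  have hfalse : Fintype.card {x : Fin n // f x = Sum.inl false} = n - u.card - F.card := by
    have : Fintype.card {x : Fin n // f x = Sum.inl false}
        = (Finset.univ \ (u ∪ F)).card := by
      rw [Fintype.card_subtype]
      congr 1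
      ext x
      by_cases hxu : x ∈ u
      · simp [hf, hxu]
      · by_cases hxF : x ∈ F <;> simp [hf, hxu, hxF]
    rw [this, Finset.card_sdiff_of_subset (Finset.subset_univ _), Finset.card_univ, Fintype.card_fin,
      Finset.card_union_of_disjoint, Nat.sub_sub]
    exact Finset.disjoint_left.mpr fun a hau haF => hdisj a haF hau
  have hinr : ∀ a : Fin n, (Fintype.card {x : Fin n // f x = Sum.inr a}).factorial = 1 := by
    intro a
    have hle : Fintype.card {x : Fin n // f x = Sum.inr a} ≤ 1 := by
      rw [Fintype.card_le_one_iff]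
      rintro ⟨x, hx⟩ ⟨y, hy⟩
      have hxa : x = a := by
        by_cases hxu : x ∈ u
        · simp [hf, hxu] at hx
        · by_cases hxF : x ∈ F
          · simp [hf, hxu, hxF] at hx; exact hx
          · simp [hf, hxu, hxF] at hx
      have hya : y = a := by
        by_cases hyu : y ∈ u
        · simp [hf, hyu] at hy
        · by_cases hyF : y ∈ F
          · simp [hf, hyu, hyF] at hy; exact hy
          · simp [hf, hyu, hyF] at hy
      exact Subtype.ext (hxa.trans hya.symm)
    interval_cases h : Fintype.card {x : Fin n // f x = Sum.inr a} <;> simp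
  rw [Fintype.prod_bool, htrue, hfalse]
  rw [Finset.prod_congr rfl (fun a _ => hinr a), Finset.prod_const_one, mul_one]

lemma sum_ite_card (p : Equiv.Perm (Fin n) → Prop) [DecidablePred p] :
    (∑ σ : Equiv.Perm (Fin n), if p σ then (1:R) else 0)
      = (Fintype.card {σ : Equiv.Perm (Fin n) // p σ} : R) := by
  rw [Finset.sum_boole, Fintype.card_subtype]

lemma c_diag (v : Finset (Fin n)) :
    ∑ σ : Equiv.Perm (Fin n), w R σ v * w R σ v
      = ((v.card.factorial * (n - v.card - (0:ℕ)).factorial : ℕ) : R) := by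
  classical
  have key : ∀ σ : Equiv.Perm (Fin n), w R σ v * w R σ v
      = if (∀ x, σ x ∈ v ↔ x ∈ v) ∧ (∀ x ∈ (∅ : Finset (Fin n)), σ x = x) then (1:R) else 0 := by
    intro σ
    by_cases hp : ∀ i ∈ v, σ i ∈ v
    · rw [if_pos ⟨mapsTo_iff_forall σ v hp, by simp⟩]
      exact w_mul_self σ v hp
    · rw [if_neg, w_eq_zero σ v hp, zero_mul]
      rintro ⟨h1, -⟩
      exact hp fun i hi => (h1 i).mpr hi
  rw [Finset.sum_congr rfl fun σ _ => key σ, sum_ite_card,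
    card_cond v ∅ (by simp)]
  simp

lemma c_off1 (v : Finset (Fin n)) (a : Fin n) (ha : a ∉ v) :
    ∑ σ : Equiv.Perm (Fin n), w R σ (insert a v) * w R σ v
      = ((v.card.factorial * (n - v.card - 1).factorial : ℕ) : R) := by
  classical
  have key : ∀ σ : Equiv.Perm (Fin n), w R σ (insert a v) * w R σ v
      = if (∀ x, σ x ∈ v ↔ x ∈ v) ∧ (∀ x ∈ ({a} : Finset (Fin n)), σ x = x) then (1:R) else 0 := by
    intro σ
    by_cases hc : (∀ x, σ x ∈ v ↔ x ∈ v) ∧ (∀ x ∈ ({a} : Finset (Fin n)), σ x = x)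
    · obtain ⟨h1, h2⟩ := hc
      have hfa : σ a = a := h2 a (Finset.mem_singleton_self a)
      rw [if_pos ⟨h1, h2⟩]
      have : w R σ (insert a v) = w R σ v := by
        unfold w; rw [gfun_insert_fix σ v hfa]
      rw [this]
      exact w_mul_self σ v fun i hi => (h1 i).mpr hi
    · rw [if_neg hc]
      by_cases hpv : ∀ i ∈ v, σ i ∈ v
      · by_cases hps : ∀ i ∈ insert a v, σ i ∈ insert a v
        · exfalso
          apply hc
          have h1 := mapsTo_iff_forall σ v hpv
          refine ⟨h1, fun x hx => ?_⟩
          rw [Finset.mem_singleton] at hx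
          subst hx
          have hsa : σ x ∈ insert x v := hps x (Finset.mem_insert_self x v)
          rcases Finset.mem_insert.mp hsa with h | h
          · exact h
          · exact absurd ((h1 x).mp h) ha
        · rw [w_eq_zero σ _ hps, zero_mul]
      · rw [w_eq_zero σ v hpv, mul_zero]
  rw [Finset.sum_congr rfl fun σ _ => key σ, sum_ite_card,
    card_cond v {a} (by simp [ha])]
  simp

lemma c_off2 (v : Finset (Fin n)) (a b : Fin n) (ha : a ∉ v) (hb : b ∉ v) (hab : a ≠ b) :
    ∑ σ : Equiv.Perm (Fin n), w R σ (insert a v) * w R σ (insert b v)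
      = ((v.card.factorial * (n - v.card - 2).factorial : ℕ) : R) := by
  classical
  have key : ∀ σ : Equiv.Perm (Fin n), w R σ (insert a v) * w R σ (insert b v)
      = if (∀ x, σ x ∈ v ↔ x ∈ v) ∧ (∀ x ∈ ({a, b} : Finset (Fin n)), σ x = x)
        then (1:R) else 0 := by
    intro σ
    by_cases hc : (∀ x, σ x ∈ v ↔ x ∈ v) ∧ (∀ x ∈ ({a, b} : Finset (Fin n)), σ x = x)
    · obtain ⟨h1, h2⟩ := hc
      have hfa : σ a = a := h2 a (by simp)
      have hfb : σ b = b := h2 b (by simp)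
      rw [if_pos ⟨h1, h2⟩]
      have e1 : w R σ (insert a v) = w R σ v := by unfold w; rw [gfun_insert_fix σ v hfa]
      have e2 : w R σ (insert b v) = w R σ v := by unfold w; rw [gfun_insert_fix σ v hfb]
      rw [e1, e2]
      exact w_mul_self σ v fun i hi => (h1 i).mpr hi
    · rw [if_neg hc]
      by_cases hpa : ∀ i ∈ insert a v, σ i ∈ insert a v
      · by_cases hpb : ∀ i ∈ insert b v, σ i ∈ insert b v
        · exfalso
          apply hc
          have hia := mapsTo_iff_forall σ (insert a v) hpa
          have hib := mapsTo_iff_forall σ (insert b v) hpb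
          have hfa : σ a = a := by
            have hsa : σ a ∈ insert a v := (hia a).mpr (Finset.mem_insert_self a v)
            rcases Finset.mem_insert.mp hsa with h | h
            · exact h
            · exfalso
              have : σ a ∈ insert b v := Finset.mem_insert_of_mem h
              have : a ∈ insert b v := (hib a).mp this
              rcases Finset.mem_insert.mp this with h' | h'
              · exact hab h'
              · exact ha h'
          have hfb : σ b = b := by
            have hsb : σ b ∈ insert b v := (hib b).mpr (Finset.mem_insert_self b v)
            rcases Finset.mem_insert.mp hsb with h | h
            · exact h
            · exfalso
              have : σ b ∈ insert a v := Finset.mem_insert_of_mem h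
              have : b ∈ insert a v := (hia b).mp this
              rcases Finset.mem_insert.mp this with h' | h'
              · exact hab h'.symm
              · exact hb h'
          refine ⟨fun x => ?_, fun x hx => ?_⟩
          · constructor
            · intro hsx
              have : x ∈ insert a v := (hia x).mp (Finset.mem_insert_of_mem hsx)
              rcases Finset.mem_insert.mp this with h' | h'
              · exfalso; subst h'; rw [hfa] at hsx; exact ha hsx
              · exact h'
            · intro hx
              have : σ x ∈ insert a v := (hia x).mpr (Finset.mem_insert_of_mem hx)
              rcases Finset.mem_insert.mp this with h' | h'
              · exfalso
                have : x = a := σ.injective (h'.trans hfa.symm)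
                subst this; exact ha hx
              · exact h'
          · rcases Finset.mem_insert.mp hx with h | h
            · subst h; exact hfa
            · rw [Finset.mem_singleton] at h; subst h; exact hfb
        · rw [w_eq_zero σ _ hpb, mul_zero]
      · rw [w_eq_zero σ _ hpa, zero_mul]
  rw [Finset.sum_congr rfl fun σ _ => key σ, sum_ite_card,
    card_cond v {a, b} (by simp; exact ⟨ha, hb⟩)]
  rw [Finset.card_pair hab]


lemma sum_finset_small {M : Type*} [AddCommMonoid M] (G : Finset (Fin n) → M)
    (hG : ∀ A : Finset (Fin n), 2 ≤ A.card → G A = 0) :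
    ∑ A : Finset (Fin n), G A = G ∅ + ∑ a : Fin n, G {a} := by
  classical
  have h1 : ∑ A : Finset (Fin n), G A
      = ∑ A ∈ (Finset.univ : Finset (Finset (Fin n))).filter (fun A => A.card ≤ 1), G A := by
    refine (Finset.sum_subset (Finset.filter_subset _ _) fun A _ hA => ?_).symm
    refine hG A ?_
    rw [Finset.mem_filter] at hA
    push_neg at hA
    exact hA (Finset.mem_univ A)
  have h2 : (Finset.univ : Finset (Finset (Fin n))).filter (fun A => A.card ≤ 1)
      = insert ∅ (Finset.univ.image fun a : Fin n => ({a} : Finset (Fin n))) := by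
    ext A
    constructor
    · intro h
      have hcard : A.card ≤ 1 := (Finset.mem_filter.mp h).2
      rcases A.eq_empty_or_nonempty with h' | ⟨a, ha⟩
      · rw [h']; exact Finset.mem_insert_self _ _
      · have hA : A = {a} := Finset.eq_singleton_iff_unique_mem.mpr
          ⟨ha, fun b hb => Finset.card_le_one.mp hcard b hb a ha⟩
        rw [hA]
        exact Finset.mem_insert_of_mem (Finset.mem_image_of_mem _ (Finset.mem_univ a))
    · intro h
      rcases Finset.mem_insert.mp h with rfl | h
      · simp
      · obtain ⟨a, -, rfl⟩ := Finset.mem_image.mp h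
        simp
  rw [h1, h2, Finset.sum_insert, Finset.sum_image]
  · intro a _ b _ h
    simpa using h
  · simp only [Finset.mem_image]
    rintro ⟨a, -, h⟩
    exact (Finset.singleton_ne_empty a) h

lemma pair_sum_eq (H : Finset (Fin n) → Finset (Fin n) → R) :
    ∑ s : Finset (Fin n), ∑ t : Finset (Fin n), H s t
      = ∑ v : Finset (Fin n), ∑ A : Finset (Fin n), ∑ B : Finset (Fin n),
          if Disjoint v A ∧ Disjoint v B ∧ Disjoint A B then H (v ∪ A) (v ∪ B) else 0 := by
  classical
  rw [← Fintype.sum_prod_type (f := fun p : Finset (Fin n) × Finset (Fin n) => H p.1 p.2)]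
  have hr : ∀ v : Finset (Fin n), (∑ A : Finset (Fin n), ∑ B : Finset (Fin n),
      if Disjoint v A ∧ Disjoint v B ∧ Disjoint A B then H (v ∪ A) (v ∪ B) else 0)
      = ∑ q ∈ (Finset.univ : Finset (Finset (Fin n) × Finset (Fin n))),
          (if Disjoint v q.1 ∧ Disjoint v q.2 ∧ Disjoint q.1 q.2
            then H (v ∪ q.1) (v ∪ q.2) else 0) := by
    intro v
    rw [Fintype.sum_prod_type]
  simp_rw [hr]
  rw [← Fintype.sum_prod_type (f := fun q : Finset (Fin n) × (Finset (Fin n) × Finset (Fin n)) =>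
    if Disjoint q.1 q.2.1 ∧ Disjoint q.1 q.2.2 ∧ Disjoint q.2.1 q.2.2
      then H (q.1 ∪ q.2.1) (q.1 ∪ q.2.2) else 0)]
  rw [← Finset.sum_filter]
  refine Finset.sum_nbij' (i := fun p : Finset (Fin n) × Finset (Fin n) =>
      ((p.1 ∩ p.2, (p.1 \ p.2, p.2 \ p.1)) : Finset (Fin n) × Finset (Fin n) × Finset (Fin n)))
    (j := fun q : Finset (Fin n) × Finset (Fin n) × Finset (Fin n) =>
      ((q.1 ∪ q.2.1, q.1 ∪ q.2.2) : Finset (Fin n) × Finset (Fin n)))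
    ?_ ?_ ?_ ?_ ?_
  · intro p _
    rw [Finset.mem_filter]
    refine ⟨Finset.mem_univ _, ?_, ?_, ?_⟩
    · rw [Finset.disjoint_left]; intro x hx hx'
      simp only [Finset.mem_inter, Finset.mem_sdiff] at hx hx'
      exact hx'.2 hx.2
    · rw [Finset.disjoint_left]; intro x hx hx'
      simp only [Finset.mem_inter, Finset.mem_sdiff] at hx hx'
      exact hx'.2 hx.1
    · rw [Finset.disjoint_left]; intro x hx hx'
      simp only [Finset.mem_sdiff] at hx hx'
      exact hx.2 hx'.1
  · intro q _; exact Finset.mem_univ _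
  · intro p _
    have e1 : (p.1 ∩ p.2) ∪ (p.1 \ p.2) = p.1 := by
      ext x; simp only [Finset.mem_union, Finset.mem_inter, Finset.mem_sdiff]; tauto
    have e2 : (p.1 ∩ p.2) ∪ (p.2 \ p.1) = p.2 := by
      ext x; simp only [Finset.mem_union, Finset.mem_inter, Finset.mem_sdiff]; tauto
    exact Prod.ext e1 e2
  · intro q hq
    rw [Finset.mem_filter] at hq
    obtain ⟨-, h1, h2, h3⟩ := hq
    have d1 := Finset.disjoint_left.mp h1
    have d2 := Finset.disjoint_left.mp h2
    have d3 := Finset.disjoint_left.mp h3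
    have e1 : (q.1 ∪ q.2.1) ∩ (q.1 ∪ q.2.2) = q.1 := by
      ext x
      simp only [Finset.mem_inter, Finset.mem_union]
      constructor
      · rintro ⟨h | h, h' | h'⟩
        · exact h
        · exact h
        · exact h'
        · exact absurd h' (d3 h)
      · intro h; exact ⟨Or.inl h, Or.inl h⟩
    have e2 : (q.1 ∪ q.2.1) \ (q.1 ∪ q.2.2) = q.2.1 := by
      ext x
      simp only [Finset.mem_sdiff, Finset.mem_union]
      constructor
      · rintro ⟨h | h, h'⟩
        · exact absurd (Or.inl h) h'
        · exact h
      · intro h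
        refine ⟨Or.inr h, ?_⟩
        rintro (h' | h')
        · exact d1 h' h
        · exact d3 h h'
    have e3 : (q.1 ∪ q.2.1) \ (q.1 ∪ q.2.2) = q.2.1 := e2
    have e4 : (q.1 ∪ q.2.2) \ (q.1 ∪ q.2.1) = q.2.2 := by
      ext x
      simp only [Finset.mem_sdiff, Finset.mem_union]
      constructor
      · rintro ⟨h | h, h'⟩
        · exact absurd (Or.inl h) h'
        · exact h
      · intro h
        refine ⟨Or.inr h, ?_⟩
        rintro (h' | h')
        · exact d2 h' h
        · exact d3 h' h
    refine Prod.ext e1 (Prod.ext e2 e4)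
  · intro p _
    have e1 : (p.1 ∩ p.2) ∪ (p.1 \ p.2) = p.1 := by
      ext x; simp only [Finset.mem_union, Finset.mem_inter, Finset.mem_sdiff]; tauto
    have e2 : (p.1 ∩ p.2) ∪ (p.2 \ p.1) = p.2 := by
      ext x; simp only [Finset.mem_union, Finset.mem_inter, Finset.mem_sdiff]; tauto
    rw [e1, e2]


lemma sum_w_vanish_right (s t : Finset (Fin n)) (h : 2 ≤ (t \ s).card) :
    ∑ σ : Equiv.Perm (Fin n), w R σ s * w R σ t = 0 := by
  have := sum_w_vanish_left (R := R) t s h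
  rw [← this]
  exact Finset.sum_congr rfl fun σ _ => mul_comm _ _

lemma union_sdiff_union (v A B : Finset (Fin n)) (h1 : Disjoint v A) (h2 : Disjoint A B) :
    (v ∪ A) \ (v ∪ B) = A := by
  have d1 := Finset.disjoint_left.mp h1
  have d2 := Finset.disjoint_left.mp h2
  ext x
  simp only [Finset.mem_sdiff, Finset.mem_union]
  constructor
  · rintro ⟨h | h, h'⟩
    · exact absurd (Or.inl h) h'
    · exact h
  · intro h
    refine ⟨Or.inr h, ?_⟩
    rintro (h' | h')
    · exact d1 h' h
    · exact d2 h h'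

/-- the value of the inner double sum, for a fixed `v` -/
lemma inner_eval (lam : R) (v : Finset (Fin n)) :
    (∑ A : Finset (Fin n), ∑ B : Finset (Fin n),
      if Disjoint v A ∧ Disjoint v B ∧ Disjoint A B
      then lam ^ (v ∪ A).card * lam ^ (v ∪ B).card *
        (∑ σ : Equiv.Perm (Fin n), w R σ (v ∪ A) * w R σ (v ∪ B)) else 0)
    = ((v.card.factorial * (n - v.card).factorial : ℕ) : R) * lam ^ (2 * v.card)
      + (((n - v.card) * (v.card.factorial * (n - v.card - 1).factorial) : ℕ) : R)
          * (2 * lam ^ (2 * v.card + 1))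
      + (((n - v.card) * ((n - v.card - 1) *
            (v.card.factorial * (n - v.card - 2).factorial)) : ℕ) : R)
          * lam ^ (2 * v.card + 2) := by
  classical
  set u := v.card with hu
  -- reduce the A-sum
  have hvanishA : ∀ A : Finset (Fin n), 2 ≤ A.card →
      (∑ B : Finset (Fin n),
        if Disjoint v A ∧ Disjoint v B ∧ Disjoint A B
        then lam ^ (v ∪ A).card * lam ^ (v ∪ B).card *
          (∑ σ : Equiv.Perm (Fin n), w R σ (v ∪ A) * w R σ (v ∪ B)) else 0) = 0 := by
    intro A hA
    refine Finset.sum_eq_zero fun B _ => ?_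
    by_cases hd : Disjoint v A ∧ Disjoint v B ∧ Disjoint A B
    · rw [if_pos hd, sum_w_vanish_left _ _ (by rw [union_sdiff_union v A B hd.1 hd.2.2]; exact hA),
        mul_zero]
    · rw [if_neg hd]
  rw [sum_finset_small _ hvanishA]
  -- reduce the two B-sums
  have hvanishB : ∀ A : Finset (Fin n), ∀ B : Finset (Fin n), 2 ≤ B.card →
      (if Disjoint v A ∧ Disjoint v B ∧ Disjoint A B
        then lam ^ (v ∪ A).card * lam ^ (v ∪ B).card *
          (∑ σ : Equiv.Perm (Fin n), w R σ (v ∪ A) * w R σ (v ∪ B)) else 0) = 0 := by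
    intro A B hB
    by_cases hd : Disjoint v A ∧ Disjoint v B ∧ Disjoint A B
    · rw [if_pos hd, sum_w_vanish_right _ _
        (by rw [union_sdiff_union v B A hd.2.1 hd.2.2.symm]; exact hB), mul_zero]
    · rw [if_neg hd]
  rw [sum_finset_small _ (fun B hB => hvanishB ∅ B hB)]
  have hsplit : ∀ a : Fin n, (∑ B : Finset (Fin n),
      if Disjoint v {a} ∧ Disjoint v B ∧ Disjoint {a} B
      then lam ^ (v ∪ {a}).card * lam ^ (v ∪ B).card *
        (∑ σ : Equiv.Perm (Fin n), w R σ (v ∪ {a}) * w R σ (v ∪ B)) else 0)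
      = (if Disjoint v {a} ∧ Disjoint v (∅ : Finset (Fin n)) ∧ Disjoint {a} (∅ : Finset (Fin n))
      then lam ^ (v ∪ {a}).card * lam ^ (v ∪ ∅).card *
        (∑ σ : Equiv.Perm (Fin n), w R σ (v ∪ {a}) * w R σ (v ∪ ∅)) else 0)
      + ∑ b : Fin n, (if Disjoint v {a} ∧ Disjoint v {b} ∧ Disjoint ({a} : Finset (Fin n)) {b}
      then lam ^ (v ∪ {a}).card * lam ^ (v ∪ {b}).card *
        (∑ σ : Equiv.Perm (Fin n), w R σ (v ∪ {a}) * w R σ (v ∪ {b})) else 0) := by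
    intro a
    exact sum_finset_small _ (fun B hB => hvanishB {a} B hB)
  rw [Finset.sum_congr rfl fun a _ => hsplit a]
  have hvins : ∀ a : Fin n, v ∪ {a} = insert a v := by
    intro a; rw [Finset.union_comm, ← Finset.insert_eq]
  have hcnt : ∀ K : R, (∑ b : Fin n, if b ∉ v then K else 0) = ((n - u : ℕ) : R) * K := by
    intro K
    rw [Finset.sum_ite, Finset.sum_const, Finset.sum_const_zero, add_zero, nsmul_eq_mul]
    congr 2
    have hfv : Finset.univ.filter (fun b : Fin n => b ∉ v) = Finset.univ \ v := by
      ext x; simp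
    rw [hfv, Finset.card_sdiff_of_subset (Finset.subset_univ v), Finset.card_univ, Fintype.card_fin]
  -- evaluate term (∅, ∅)
  have h00 : (if Disjoint v ∅ ∧ Disjoint v ∅ ∧ Disjoint (∅ : Finset (Fin n)) ∅ then
          lam ^ (v ∪ ∅).card * lam ^ (v ∪ ∅).card *
            ∑ σ : Equiv.Perm (Fin n), w R σ (v ∪ ∅) * w R σ (v ∪ ∅)
        else 0)
      = lam ^ u * lam ^ u * ((u.factorial * (n - u).factorial : ℕ) : R) := by
    rw [if_pos ⟨Finset.disjoint_empty_right v, Finset.disjoint_empty_right v,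
      Finset.disjoint_empty_right ∅⟩, Finset.union_empty, c_diag]
    simp [hu]
  -- evaluate term (∅, {b})
  have h0b : ∀ b : Fin n, (if Disjoint v ∅ ∧ Disjoint v {b} ∧ Disjoint (∅ : Finset (Fin n)) {b}
        then lam ^ (v ∪ ∅).card * lam ^ (v ∪ {b}).card *
          ∑ σ : Equiv.Perm (Fin n), w R σ (v ∪ ∅) * w R σ (v ∪ {b})
        else 0)
      = (if b ∉ v then lam ^ u * lam ^ (u + 1) *
          ((u.factorial * (n - u - 1).factorial : ℕ) : R) else 0) := by
    intro b
    by_cases hb : b ∈ v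
    · rw [if_neg, if_neg (by simp [hb])]
      rintro ⟨-, hd, -⟩
      exact (Finset.disjoint_singleton_right.mp hd) hb
    · rw [if_pos ⟨Finset.disjoint_empty_right v, Finset.disjoint_singleton_right.mpr hb,
        Finset.disjoint_empty_left _⟩, if_pos hb, Finset.union_empty, hvins b,
        Finset.card_insert_of_notMem hb]
      have hC : (∑ σ : Equiv.Perm (Fin n), w R σ v * w R σ (insert b v))
          = ((v.card.factorial * (n - v.card - 1).factorial : ℕ) : R) := by
        rw [Finset.sum_congr rfl fun σ _ => mul_comm (w R σ v) (w R σ (insert b v)), c_off1 v b hb]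
      rw [hC, hu]
  -- evaluate term ({a}, ∅)
  have ha0 : ∀ a : Fin n, (if Disjoint v {a} ∧ Disjoint v ∅ ∧ Disjoint ({a} : Finset (Fin n)) ∅
        then lam ^ (v ∪ {a}).card * lam ^ (v ∪ ∅).card *
          ∑ σ : Equiv.Perm (Fin n), w R σ (v ∪ {a}) * w R σ (v ∪ ∅)
        else 0)
      = (if a ∉ v then lam ^ (u + 1) * lam ^ u *
          ((u.factorial * (n - u - 1).factorial : ℕ) : R) else 0) := by
    intro a
    by_cases ha : a ∈ v
    · rw [if_neg, if_neg (by simp [ha])]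
      rintro ⟨hd, -, -⟩
      exact (Finset.disjoint_singleton_right.mp hd) ha
    · rw [if_pos ⟨Finset.disjoint_singleton_right.mpr ha, Finset.disjoint_empty_right v,
        Finset.disjoint_empty_right _⟩, if_pos ha, Finset.union_empty, hvins a,
        Finset.card_insert_of_notMem ha, c_off1 v a ha, hu]
  -- evaluate term ({a}, {b})
  have hab : ∀ a b : Fin n, (if Disjoint v {a} ∧ Disjoint v {b} ∧ Disjoint ({a} : Finset (Fin n)) {b}
        then lam ^ (v ∪ {a}).card * lam ^ (v ∪ {b}).card *
          ∑ σ : Equiv.Perm (Fin n), w R σ (v ∪ {a}) * w R σ (v ∪ {b})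
        else 0)
      = (if a ∉ v ∧ b ∉ v ∧ a ≠ b then lam ^ (u + 1) * lam ^ (u + 1) *
          ((u.factorial * (n - u - 2).factorial : ℕ) : R) else 0) := by
    intro a b
    have hiff : (Disjoint v {a} ∧ Disjoint v {b} ∧ Disjoint ({a} : Finset (Fin n)) {b})
        ↔ (a ∉ v ∧ b ∉ v ∧ a ≠ b) := by
      rw [Finset.disjoint_singleton_right, Finset.disjoint_singleton_right,
        Finset.disjoint_singleton]
    by_cases hc : a ∉ v ∧ b ∉ v ∧ a ≠ b
    · obtain ⟨ha, hb, hne⟩ := hc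
      rw [if_pos (hiff.mpr ⟨ha, hb, hne⟩), if_pos ⟨ha, hb, hne⟩, hvins a, hvins b,
        Finset.card_insert_of_notMem ha, Finset.card_insert_of_notMem hb,
        c_off2 v a b ha hb hne, hu]
    · rw [if_neg (fun hd => hc (hiff.mp hd)), if_neg hc]
  rw [h00, Finset.sum_congr rfl fun b _ => h0b b, hcnt,
    Finset.sum_congr rfl (fun a _ => congrArg₂ (· + ·) (ha0 a)
      (Finset.sum_congr rfl fun b _ => hab a b))]
  -- evaluate the inner double-count
  have hinner : ∀ a : Fin n, ((if a ∉ v then lam ^ (u + 1) * lam ^ u *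
          ((u.factorial * (n - u - 1).factorial : ℕ) : R) else 0)
        + ∑ b : Fin n, (if a ∉ v ∧ b ∉ v ∧ a ≠ b then lam ^ (u + 1) * lam ^ (u + 1) *
          ((u.factorial * (n - u - 2).factorial : ℕ) : R) else 0))
      = (if a ∉ v then (lam ^ (u + 1) * lam ^ u *
          ((u.factorial * (n - u - 1).factorial : ℕ) : R)
          + ((n - u - 1 : ℕ) : R) * (lam ^ (u + 1) * lam ^ (u + 1) *
          ((u.factorial * (n - u - 2).factorial : ℕ) : R))) else 0) := by
    intro a
    by_cases ha : a ∈ v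
    · rw [if_neg (by simp [ha]), if_neg (by simp [ha]), zero_add]
      exact Finset.sum_eq_zero fun b _ => if_neg (by tauto)
    · rw [if_pos ha, if_pos ha]
      congr 1
      have hcong : ∀ b : Fin n, (if a ∉ v ∧ b ∉ v ∧ a ≠ b then lam ^ (u + 1) * lam ^ (u + 1) *
            ((u.factorial * (n - u - 2).factorial : ℕ) : R) else 0)
          = (if b ∉ v ∧ a ≠ b then lam ^ (u + 1) * lam ^ (u + 1) *
            ((u.factorial * (n - u - 2).factorial : ℕ) : R) else 0) := by
        intro b
        refine if_congr ?_ rfl rfl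
        constructor
        · rintro ⟨-, h1, h2⟩; exact ⟨h1, h2⟩
        · rintro ⟨h1, h2⟩; exact ⟨ha, h1, h2⟩
      rw [Finset.sum_congr rfl fun b _ => hcong b, Finset.sum_ite, Finset.sum_const,
        Finset.sum_const_zero, add_zero, nsmul_eq_mul]
      congr 2
      have hfv : Finset.univ.filter (fun b : Fin n => b ∉ v ∧ a ≠ b)
          = (Finset.univ \ v).erase a := by
        ext x
        simp only [Finset.mem_filter, Finset.mem_univ, true_and, Finset.mem_erase,
          Finset.mem_sdiff, ne_eq, eq_comm]
        tauto
      rw [hfv, Finset.card_erase_of_mem (by simp [ha]), Finset.card_sdiff_of_subset (Finset.subset_univ v),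
        Finset.card_univ, Fintype.card_fin]
  rw [Finset.sum_congr rfl fun a _ => hinner a, hcnt]
  push_cast
  ring

end SumDetAux

open SumDetAux in
/-- **Mixed Hodge polynomial of the `GL(n,ℂ)`-character variety of `ℤ²`.**
For any commutative ring `R`, `n ≥ 1` and `λ ∈ R`:
`∑_{σ ∈ S_n} det(I_n + λ·M_σ)² = n!·(1+λ)²·(1 + λ² + ⋯ + λ^{2n−2})`. -/
theorem sum_det_sq_eq (R : Type*) [CommRing R] (n : ℕ) (hn : 1 ≤ n) (lam : R) :
    ∑ σ : Equiv.Perm (Fin n),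
        ((1 : Matrix (Fin n) (Fin n) R) + lam • σ.permMatrix R).det ^ 2
      = (n.factorial : R) * (1 + lam) ^ 2 *
          ∑ k ∈ Finset.range n, lam ^ (2 * k) := by
  classical
  obtain ⟨m, rfl⟩ : ∃ m, n = m + 1 := ⟨n - 1, (Nat.succ_pred_eq_of_pos hn).symm⟩
  set n := m + 1 with hn1
  -- Step 1: expand the determinants
  have step1 : ∑ σ : Equiv.Perm (Fin n),
        ((1 : Matrix (Fin n) (Fin n) R) + lam • σ.permMatrix R).det ^ 2
      = ∑ s : Finset (Fin n), ∑ t : Finset (Fin n),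
          lam ^ s.card * lam ^ t.card * (∑ σ : Equiv.Perm (Fin n), w R σ s * w R σ t) := by
    calc ∑ σ : Equiv.Perm (Fin n),
          ((1 : Matrix (Fin n) (Fin n) R) + lam • σ.permMatrix R).det ^ 2
        = ∑ σ : Equiv.Perm (Fin n), ∑ s : Finset (Fin n), ∑ t : Finset (Fin n),
            (lam ^ s.card * w R σ s) * (lam ^ t.card * w R σ t) := by
          refine Finset.sum_congr rfl fun σ _ => ?_
          rw [sq, det_expand σ lam, Finset.sum_mul_sum]
      _ = ∑ s : Finset (Fin n), ∑ σ : Equiv.Perm (Fin n), ∑ t : Finset (Fin n),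
            (lam ^ s.card * w R σ s) * (lam ^ t.card * w R σ t) := Finset.sum_comm
      _ = ∑ s : Finset (Fin n), ∑ t : Finset (Fin n), ∑ σ : Equiv.Perm (Fin n),
            (lam ^ s.card * w R σ s) * (lam ^ t.card * w R σ t) := by
          exact Finset.sum_congr rfl fun s _ => Finset.sum_comm
      _ = ∑ s : Finset (Fin n), ∑ t : Finset (Fin n),
            lam ^ s.card * lam ^ t.card * (∑ σ : Equiv.Perm (Fin n), w R σ s * w R σ t) := by
          refine Finset.sum_congr rfl fun s _ => Finset.sum_congr rfl fun t _ => ?_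
          rw [Finset.mul_sum]
          exact Finset.sum_congr rfl fun σ _ => by ring
  rw [step1,
    pair_sum_eq (fun s t => lam ^ s.card * lam ^ t.card *
      (∑ σ : Equiv.Perm (Fin n), w R σ s * w R σ t)),
    Finset.sum_congr rfl fun v _ => inner_eval lam v]
  -- Step 2: group by cardinality
  set φ : ℕ → R := fun j =>
      ((j.factorial * (n - j).factorial : ℕ) : R) * lam ^ (2 * j)
      + (((n - j) * (j.factorial * (n - j - 1).factorial) : ℕ) : R) * (2 * lam ^ (2 * j + 1))
      + (((n - j) * ((n - j - 1) * (j.factorial * (n - j - 2).factorial)) : ℕ) : R)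
          * lam ^ (2 * j + 2) with hφ
  have step2 : (∑ v : Finset (Fin n), φ v.card)
      = ∑ j ∈ Finset.range (n + 1), (n.choose j) • φ j := by
    rw [← Finset.powerset_univ, Finset.sum_powerset]
    rw [Finset.card_univ, Fintype.card_fin]
    refine Finset.sum_congr rfl fun j _ => ?_
    rw [Finset.sum_powersetCard j Finset.univ φ, Finset.card_univ, Fintype.card_fin]
  rw [step2]
  -- Step 3: evaluate coefficients
  have hterm : ∀ j ∈ Finset.range (n + 1), (n.choose j) • φ j
      = (n.factorial : R) * lam ^ (2 * j)
        + ((if j < n then n.factorial else 0 : ℕ) : R) * (2 * lam ^ (2 * j + 1))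
        + ((if j + 2 ≤ n then n.factorial else 0 : ℕ) : R) * lam ^ (2 * j + 2) := by
    intro j hj
    rw [Finset.mem_range, Nat.lt_succ_iff] at hj
    have h1 : (n.choose j) * (j.factorial * (n - j).factorial) = n.factorial := by
      rw [← mul_assoc]; exact Nat.choose_mul_factorial_mul_factorial hj
    have h2 : (n.choose j) * ((n - j) * (j.factorial * (n - j - 1).factorial))
        = if j < n then n.factorial else 0 := by
      by_cases hjn : j < n
      · rw [if_pos hjn]
        have hpos : 0 < n - j := by omega
        calc n.choose j * ((n - j) * (j.factorial * (n - j - 1).factorial))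
            = n.choose j * (j.factorial * ((n - j) * (n - j - 1).factorial)) := by ring
          _ = n.choose j * (j.factorial * (n - j).factorial) := by
              rw [Nat.mul_factorial_pred hpos.ne']
          _ = n.factorial := h1
      · rw [if_neg hjn]
        have hz : n - j = 0 := by omega
        rw [hz]; ring
    have h3 : (n.choose j) * ((n - j) * ((n - j - 1) * (j.factorial * (n - j - 2).factorial)))
        = if j + 2 ≤ n then n.factorial else 0 := by
      by_cases hj2 : j + 2 ≤ n
      · rw [if_pos hj2]
        have hpos1 : 0 < n - j - 1 := by omega
        have hpos : 0 < n - j := by omega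
        have e1 : (n - j - 1) * (n - j - 2).factorial = (n - j - 1).factorial := by
          have h := Nat.mul_factorial_pred hpos1.ne'
          rwa [show n - j - 1 - 1 = n - j - 2 by omega] at h
        calc n.choose j * ((n - j) * ((n - j - 1) * (j.factorial * (n - j - 2).factorial)))
            = n.choose j * ((n - j) * (j.factorial * ((n - j - 1) * (n - j - 2).factorial))) := by
              ring
          _ = n.choose j * ((n - j) * (j.factorial * (n - j - 1).factorial)) := by rw [e1]
          _ = if j < n then n.factorial else 0 := h2
          _ = n.factorial := if_pos (by omega)
      · rw [if_neg hj2]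
        have hz : n - j = 0 ∨ n - j - 1 = 0 := by omega
        rcases hz with h | h <;> rw [h] <;> ring
    have key : ∀ (c a1 a2 a3 b1 b2 b3 : ℕ) (X Y Z : R), c * a1 = b1 → c * a2 = b2 →
        c * a3 = b3 →
        (c : R) * ((a1 : R) * X + (a2 : R) * Y + (a3 : R) * Z)
          = (b1 : R) * X + (b2 : R) * Y + (b3 : R) * Z := by
      rintro c a1 a2 a3 b1 b2 b3 X Y Z rfl rfl rfl
      push_cast
      ring
    rw [hφ, nsmul_eq_mul]
    exact key _ _ _ _ _ _ _ _ _ _ h1 h2 h3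
  rw [Finset.sum_congr rfl hterm, Finset.sum_add_distrib, Finset.sum_add_distrib]
  have hS1 : ∑ j ∈ Finset.range (n + 1), (n.factorial : R) * lam ^ (2 * j)
      = (∑ j ∈ Finset.range n, (n.factorial : R) * lam ^ (2 * j))
        + (n.factorial : R) * lam ^ (2 * n) :=
    Finset.sum_range_succ _ n
  have hS2 : ∑ j ∈ Finset.range (n + 1),
        ((if j < n then n.factorial else 0 : ℕ) : R) * (2 * lam ^ (2 * j + 1))
      = ∑ j ∈ Finset.range n, (n.factorial : R) * (2 * lam ^ (2 * j + 1)) := by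
    rw [Finset.sum_range_succ, if_neg (lt_irrefl n)]
    simp only [Nat.cast_zero, zero_mul, add_zero]
    exact Finset.sum_congr rfl fun j hj => by rw [if_pos (Finset.mem_range.mp hj)]
  have hS3 : ∑ j ∈ Finset.range (n + 1),
        ((if j + 2 ≤ n then n.factorial else 0 : ℕ) : R) * lam ^ (2 * j + 2)
      = ∑ j ∈ Finset.range m, (n.factorial : R) * lam ^ (2 * j + 2) := by
    rw [show n + 1 = m + 1 + 1 from rfl, Finset.sum_range_succ, Finset.sum_range_succ,
      if_neg (by omega), if_neg (by omega)]
    simp only [Nat.cast_zero, zero_mul, add_zero]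
    refine Finset.sum_congr rfl fun j hj => ?_
    have hjm := Finset.mem_range.mp hj
    rw [if_pos (by omega)]
  have hRHS : (n.factorial : R) * (1 + lam) ^ 2 * ∑ k ∈ Finset.range n, lam ^ (2 * k)
      = (∑ k ∈ Finset.range n, (n.factorial : R) * lam ^ (2 * k))
        + (∑ k ∈ Finset.range n, (n.factorial : R) * (2 * lam ^ (2 * k + 1)))
        + (∑ k ∈ Finset.range n, (n.factorial : R) * lam ^ (2 * k + 2)) := by
    rw [Finset.mul_sum, ← Finset.sum_add_distrib, ← Finset.sum_add_distrib]
    exact Finset.sum_congr rfl fun k _ => by ring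
  have hlast : ∑ k ∈ Finset.range n, (n.factorial : R) * lam ^ (2 * k + 2)
      = (∑ k ∈ Finset.range m, (n.factorial : R) * lam ^ (2 * k + 2))
        + (n.factorial : R) * lam ^ (2 * m + 2) :=
    Finset.sum_range_succ _ m
  rw [hS1, hS2, hS3, hRHS, hlast, show 2 * n = 2 * m + 2 by omega]
  ring
end
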